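/- arXiv:1603.06088 — 7 statements merged into one kernel-verified Lean document; each statement's English description precedes it below -/
import Mathlib

section
/- Let E ⊆ ℝⁿ be a measurable set with locally finite s-perimeter for some s ∈ (0,1), and let Ω ⊆ ℝⁿ be an open set. If ∂⁻E ∩ Ω ≠ ∅, then P_s^L(E,Ω) > 0. -/
open MeasureTheory Metric Set Filter Bornology
open scoped ENNReal Topology

/-- The fractional kernel `|x-y|^{-(n+s)}` as an extended nonnegative real. -/
noncomputable def fracKer (n : ℕ) (s : ℝ) (x y : EuclideanSpace ℝ (Fin n)) : ℝ≥0∞ :=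
  ENNReal.ofReal (‖x - y‖ ^ (-((n : ℝ) + s)))

/-- The interaction `L_s(A,B) = ∫_A ∫_B |x-y|^{-(n+s)} dy dx`. -/
noncomputable def interL (n : ℕ) (s : ℝ) (A B : Set (EuclideanSpace ℝ (Fin n))) : ℝ≥0∞ :=
  ∫⁻ x in A, ∫⁻ y in B, fracKer n s x y

/-- The local part of the `s`-fractional perimeter of `E` in `Ω`. -/
noncomputable def perL (n : ℕ) (s : ℝ) (E Ω : Set (EuclideanSpace ℝ (Fin n))) : ℝ≥0∞ :=
  interL n s (E ∩ Ω) (Eᶜ ∩ Ω)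

/-- The nonlocal part of the `s`-fractional perimeter of `E` in `Ω`. -/
noncomputable def perNL (n : ℕ) (s : ℝ) (E Ω : Set (EuclideanSpace ℝ (Fin n))) : ℝ≥0∞ :=
  interL n s (E ∩ Ω) (Eᶜ \ Ω) + interL n s (E \ Ω) (Eᶜ ∩ Ω)

/-- The `s`-fractional perimeter of `E` in `Ω`. -/
noncomputable def per (n : ℕ) (s : ℝ) (E Ω : Set (EuclideanSpace ℝ (Fin n))) : ℝ≥0∞ :=
  interL n s (E ∩ Ω) (Eᶜ ∩ Ω) + interL n s (E ∩ Ω) (Eᶜ \ Ω) + interL n s (E \ Ω) (Eᶜ ∩ Ω)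

/-- The global `s`-fractional perimeter `P_s(E) = L_s(E, Eᶜ)`. -/
noncomputable def perG (n : ℕ) (s : ℝ) (E : Set (EuclideanSpace ℝ (Fin n))) : ℝ≥0∞ :=
  interL n s E Eᶜ

/-- The measure theoretic boundary `∂⁻E`. Note `volume (ball x r) = ω_n rⁿ`. -/
def mtb (n : ℕ) (E : Set (EuclideanSpace ℝ (Fin n))) : Set (EuclideanSpace ℝ (Fin n)) :=
  {x | ∀ r > (0 : ℝ), 0 < volume (E ∩ ball x r) ∧ volume (E ∩ ball x r) < volume (ball x r)}

/-- `E` has locally finite `s`-perimeter: finite `s`-perimeter in every bounded open set. -/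
def locFinPer (n : ℕ) (s : ℝ) (E : Set (EuclideanSpace ℝ (Fin n))) : Prop :=
  ∀ Ω : Set (EuclideanSpace ℝ (Fin n)), IsOpen Ω → IsBounded Ω → per n s E Ω < ⊤

/-- If `E` has locally finite `s`-perimeter and the measure theoretic
boundary of `E` meets the open set `Ω`, then the local `s`-perimeter of `E` in `Ω`
is positive. -/
theorem perL_pos_of_mtBoundary_inter_nonempty (n : ℕ) (hn : 1 ≤ n) (s : ℝ)
    (hs : s ∈ Set.Ioo (0 : ℝ) 1) (E : Set (EuclideanSpace ℝ (Fin n))) (hE : MeasurableSet E)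
    (hloc : locFinPer n s E) (Ω : Set (EuclideanSpace ℝ (Fin n))) (hΩ : IsOpen Ω)
    (hne : (mtb n E ∩ Ω).Nonempty) :
    0 < perL n s E Ω := by
  obtain ⟨x, hxb, hxΩ⟩ := hne
  obtain ⟨r, hr, hball⟩ := Metric.isOpen_iff.mp hΩ x hxΩ
  obtain ⟨hA, hAlt⟩ := hxb r hr
  set A : Set (EuclideanSpace ℝ (Fin n)) := E ∩ ball x r with hAdef
  set B : Set (EuclideanSpace ℝ (Fin n)) := Eᶜ ∩ ball x r with hBdef
  have hBmeas : MeasurableSet B := hE.compl.inter measurableSet_ball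
  have hBvol : 0 < volume B := by
    have hfin : volume (ball x r) < ⊤ := measure_ball_lt_top
    have : volume (ball x r \ E) ≠ 0 := by
      intro h0
      have hsum := measure_inter_add_diff (μ := volume) (ball x r) hE
      rw [h0, add_zero, inter_comm] at hsum
      exact hAlt.ne hsum
    have heq : ball x r \ E = B := by
      ext y; simp [hBdef, mem_diff, and_comm]
    rw [heq] at this
    exact pos_iff_ne_zero.mpr this
  set c : ℝ≥0∞ := ENNReal.ofReal ((2 * r) ^ (-((n : ℝ) + s))) with hcdef
  have hc : 0 < c := by
    apply ENNReal.ofReal_pos.mpr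
    exact Real.rpow_pos_of_pos (by linarith) _
  -- pointwise kernel bound
  have hker : ∀ y ∈ A, ∀ z ∈ B, c ≤ fracKer n s y z := by
    intro y hy z hz
    have hyz : y ≠ z := by
      intro h; exact hz.1 (h ▸ hy.1)
    have hpos : (0 : ℝ) < ‖y - z‖ := by
      simpa [sub_eq_zero] using hyz
    have hle : ‖y - z‖ ≤ 2 * r := by
      have := dist_triangle y x z
      have h1 : dist y x < r := mem_ball.mp hy.2
      have h2 : dist x z < r := by
        have := mem_ball.mp hz.2; rwa [dist_comm] at this
      have : dist y z ≤ 2 * r := by linarith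
      simpa [dist_eq_norm] using this
    apply ENNReal.ofReal_le_ofReal
    exact Real.rpow_le_rpow_of_nonpos hpos hle (neg_nonpos.mpr (by have h0 := hs.1; have h1 : (0:ℝ) ≤ (n:ℝ) := Nat.cast_nonneg n; linarith))
  have hmono : c * volume B * volume A ≤ perL n s E Ω := by
    have hAsub : A ⊆ E ∩ Ω := inter_subset_inter_right _ hball
    have hBsub : B ⊆ Eᶜ ∩ Ω := inter_subset_inter_right _ hball
    calc c * volume B * volume A
        = ∫⁻ _ in A, c * volume B := by rw [setLIntegral_const]
      _ ≤ ∫⁻ y in A, ∫⁻ z in B, fracKer n s y z := by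
          apply lintegral_mono_ae
          filter_upwards [ae_restrict_mem (hE.inter measurableSet_ball)] with y hy
          calc c * volume B = ∫⁻ _ in B, c := (setLIntegral_const _ _).symm
            _ ≤ ∫⁻ z in B, fracKer n s y z :=
                setLIntegral_mono' hBmeas (fun z hz => hker y hy z hz)
      _ ≤ ∫⁻ y in E ∩ Ω, ∫⁻ z in B, fracKer n s y z :=
          lintegral_mono' (Measure.restrict_mono hAsub le_rfl) le_rfl
      _ ≤ ∫⁻ y in E ∩ Ω, ∫⁻ z in Eᶜ ∩ Ω, fracKer n s y z := by
          apply lintegral_mono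
          intro y
          exact lintegral_mono' (Measure.restrict_mono hBsub le_rfl) le_rfl
      _ = perL n s E Ω := rfl
  refine lt_of_lt_of_le ?_ hmono
  exact ENNReal.mul_pos (ENNReal.mul_pos hc.ne' hBvol.ne').ne' hA.ne'
end

section
/- Let E ⊆ ℝⁿ be a measurable set with locally finite s-perimeter for some s ∈ (0,1), and let Ω ⊆ ℝⁿ be a connected open set. If ∂⁻E ∩ Ω = ∅, then P_s^L(E,Ω) = 0. Consequently, for connected open Ω one has P_s^L(E,Ω) > 0 if and only if ∂⁻E ∩ Ω ≠ ∅. -/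
open MeasureTheory Metric Set Filter Bornology
open scoped ENNReal Topology

/- ### Auxiliary lemmas -/

lemma interL_zero_left' {n : ℕ} {s : ℝ} {A B : Set (EuclideanSpace ℝ (Fin n))}
    (hA : volume A = 0) : interL n s A B = 0 := by
  unfold interL
  rw [Measure.restrict_eq_zero.mpr hA, lintegral_zero_measure]

lemma interL_zero_right' {n : ℕ} {s : ℝ} {A B : Set (EuclideanSpace ℝ (Fin n))}
    (hB : volume B = 0) : interL n s A B = 0 := by
  unfold interL
  simp [Measure.restrict_eq_zero.mpr hB]

lemma interL_mono' {n : ℕ} {s : ℝ} {A A' B B' : Set (EuclideanSpace ℝ (Fin n))}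
    (hA : A ⊆ A') (hB : B ⊆ B') : interL n s A B ≤ interL n s A' B' := by
  unfold interL
  refine lintegral_mono' (Measure.restrict_mono hA le_rfl) fun x => ?_
  exact lintegral_mono' (Measure.restrict_mono hB le_rfl) fun y => le_rfl

lemma interL_pos' {n : ℕ} {s : ℝ} (hs : 0 < s) {E : Set (EuclideanSpace ℝ (Fin n))}
    (hE : MeasurableSet E) (x₀ : EuclideanSpace ℝ (Fin n)) {r : ℝ} (hr : 0 < r)
    (h1 : 0 < volume (E ∩ ball x₀ r)) (h2 : 0 < volume (Eᶜ ∩ ball x₀ r)) :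
    0 < interL n s (E ∩ ball x₀ r) (Eᶜ ∩ ball x₀ r) := by
  set c : ℝ≥0∞ := ENNReal.ofReal ((2*r) ^ (-((n : ℝ) + s))) with hc
  have hcpos : 0 < c := by
    apply ENNReal.ofReal_pos.mpr
    exact Real.rpow_pos_of_pos (by linarith) _
  have hA : MeasurableSet (E ∩ ball x₀ r) := hE.inter measurableSet_ball
  have hB : MeasurableSet (Eᶜ ∩ ball x₀ r) := hE.compl.inter measurableSet_ball
  have key : c * volume (Eᶜ ∩ ball x₀ r) * volume (E ∩ ball x₀ r)
      ≤ interL n s (E ∩ ball x₀ r) (Eᶜ ∩ ball x₀ r) := by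
    unfold interL
    calc c * volume (Eᶜ ∩ ball x₀ r) * volume (E ∩ ball x₀ r)
        = ∫⁻ _ in (E ∩ ball x₀ r), c * volume (Eᶜ ∩ ball x₀ r) := by
          rw [setLIntegral_const]
      _ ≤ _ := by
          refine lintegral_mono_ae ?_
          filter_upwards [ae_restrict_mem hA] with x hx
          calc c * volume (Eᶜ ∩ ball x₀ r) = ∫⁻ _ in (Eᶜ ∩ ball x₀ r), c := by
                rw [setLIntegral_const]
            _ ≤ _ := by
                refine lintegral_mono_ae ?_
                filter_upwards [ae_restrict_mem hB] with y hy
                unfold fracKer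
                apply ENNReal.ofReal_le_ofReal
                have hxy : x ≠ y := fun h => hy.1 (h ▸ hx.1)
                have hpos : 0 < ‖x - y‖ := by
                  rw [norm_pos_iff, sub_ne_zero]; exact hxy
                have hle : ‖x - y‖ ≤ 2 * r := by
                  have h1 := hx.2; have h2 := hy.2
                  rw [mem_ball] at h1 h2
                  rw [show x - y = (x - x₀) + (x₀ - y) by abel]
                  calc ‖(x - x₀) + (x₀ - y)‖ ≤ ‖x - x₀‖ + ‖x₀ - y‖ := norm_add_le _ _
                    _ ≤ 2 * r := by
                        rw [← dist_eq_norm, ← dist_eq_norm, dist_comm x₀ y]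
                        linarith [h1, h2]
                refine Real.rpow_le_rpow_of_nonpos hpos hle (neg_nonpos_of_nonneg ?_)
                positivity
  refine lt_of_lt_of_le ?_ key
  exact ENNReal.mul_pos (ENNReal.mul_pos hcpos.ne' h2.ne').ne' h1.ne'

/-- The set of points near which `F` has measure zero, is open. -/
lemma isOpen_locallyNull {n : ℕ} (F : Set (EuclideanSpace ℝ (Fin n))) :
    IsOpen {x : EuclideanSpace ℝ (Fin n) | ∃ r > (0:ℝ), volume (F ∩ ball x r) = 0} := by
  rw [Metric.isOpen_iff]
  rintro x ⟨r, hr, hx⟩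
  refine ⟨r / 2, by linarith, fun y hy => ?_⟩
  refine ⟨r / 2, by linarith, ?_⟩
  refine measure_mono_null (inter_subset_inter_right F ?_) hx
  intro z hz
  rw [mem_ball] at *
  calc dist z x ≤ dist z y + dist y x := dist_triangle _ _ _
    _ < r := by linarith

/-- If `F` is locally null around every point of `Ω`, then `F ∩ Ω` is null. -/
lemma vol_inter_eq_zero_of_locally {n : ℕ} {F Ω : Set (EuclideanSpace ℝ (Fin n))}
    (h : ∀ x ∈ Ω, ∃ r > (0:ℝ), volume (F ∩ ball x r) = 0) :
    volume (F ∩ Ω) = 0 := by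
  refine measure_null_of_locally_null _ fun x hx => ?_
  obtain ⟨r, hr, h0⟩ := h x hx.2
  refine ⟨F ∩ ball x r, ?_, h0⟩
  rw [mem_nhdsWithin]
  exact ⟨ball x r, isOpen_ball, mem_ball_self hr,
    fun z hz => ⟨hz.2.1, hz.1⟩⟩

/-- If `E` has locally finite `s`-perimeter and `Ω` is a connected open
set with `∂⁻E ∩ Ω = ∅`, then `P_s^L(E,Ω) = 0`; consequently, for connected open `Ω`,
`P_s^L(E,Ω) > 0` iff `∂⁻E ∩ Ω ≠ ∅`. -/
theorem perL_eq_zero_of_mtBoundary_inter_empty (n : ℕ) (hn : 1 ≤ n) (s : ℝ)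
    (hs : s ∈ Set.Ioo (0 : ℝ) 1) (E : Set (EuclideanSpace ℝ (Fin n))) (hE : MeasurableSet E)
    (hloc : locFinPer n s E) (Ω : Set (EuclideanSpace ℝ (Fin n))) (hΩ : IsOpen Ω)
    (hconn : IsConnected Ω) :
    (mtb n E ∩ Ω = ∅ → perL n s E Ω = 0) ∧
      (0 < perL n s E Ω ↔ (mtb n E ∩ Ω).Nonempty) := by
  have main : mtb n E ∩ Ω = ∅ → perL n s E Ω = 0 := by
    intro hemp
    -- the two open sets
    set U : Set (EuclideanSpace ℝ (Fin n)) :=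
      {x | ∃ r > (0:ℝ), volume (E ∩ ball x r) = 0} with hU
    set V : Set (EuclideanSpace ℝ (Fin n)) :=
      {x | ∃ r > (0:ℝ), volume (Eᶜ ∩ ball x r) = 0} with hV
    have hUopen : IsOpen U := isOpen_locallyNull E
    have hVopen : IsOpen V := isOpen_locallyNull Eᶜ
    have hdisj : Disjoint U V := by
      rw [Set.disjoint_left]
      rintro x ⟨r₁, hr₁, h₁⟩ ⟨r₂, hr₂, h₂⟩
      set r := min r₁ r₂ with hrdef
      have hr : 0 < r := lt_min hr₁ hr₂
      have hb : (0:ℝ≥0∞) < volume (ball x r) := measure_ball_pos _ _ hr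
      have hsub : ball x r ⊆ (E ∩ ball x r₁) ∪ (Eᶜ ∩ ball x r₂) := by
        intro z hz
        by_cases hzE : z ∈ E
        · exact Or.inl ⟨hzE, ball_subset_ball (min_le_left _ _) hz⟩
        · exact Or.inr ⟨hzE, ball_subset_ball (min_le_right _ _) hz⟩
      have : volume (ball x r) = 0 :=
        measure_mono_null hsub (measure_union_null h₁ h₂)
      exact hb.ne' this
    have hcover : Ω ⊆ U ∪ V := by
      intro x hx
      have hxnot : x ∉ mtb n E := by
        intro hmem
        exact absurd (Set.mem_inter hmem hx) (by rw [hemp]; exact notMem_empty x)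
      simp only [mtb, mem_setOf_eq, not_forall] at hxnot
      obtain ⟨r, hr, hfail⟩ := hxnot
      rw [not_and_or] at hfail
      rcases hfail with h | h
      · left
        exact ⟨r, hr, by simpa using (not_lt.mp h)⟩
      · right
        refine ⟨r, hr, ?_⟩
        have hle : volume (ball x r) ≤ volume (E ∩ ball x r) := not_lt.mp h
        have hsplit : volume (ball x r ∩ E) + volume (ball x r \ E) = volume (ball x r) :=
          measure_inter_add_diff _ hE
        have hfin : volume (E ∩ ball x r) < ⊤ :=
          lt_of_le_of_lt (measure_mono inter_subset_right) measure_ball_lt_top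
        have : volume (ball x r \ E) = 0 := by
          rw [inter_comm] at hsplit
          by_contra h0
          have hlt : volume (ball x r) < volume (E ∩ ball x r) + volume (ball x r \ E) := by
            calc volume (ball x r) ≤ volume (E ∩ ball x r) := hle
              _ < volume (E ∩ ball x r) + volume (ball x r \ E) :=
                ENNReal.lt_add_right hfin.ne (h0)
          rw [hsplit] at hlt
          exact lt_irrefl _ hlt
        rwa [← Set.diff_eq_compl_inter]
    rcases hconn.isPreconnected.subset_or_subset hUopen hVopen hdisj hcover with hsub | hsub
    · -- E has measure zero in Ω
      apply interL_zero_left'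
      exact vol_inter_eq_zero_of_locally fun x hx => hsub hx
    · apply interL_zero_right'
      exact vol_inter_eq_zero_of_locally fun x hx => hsub hx
  refine ⟨main, ?_, ?_⟩
  · intro hpos
    by_contra hne
    rw [Set.not_nonempty_iff_eq_empty] at hne
    rw [main hne] at hpos
    exact lt_irrefl _ hpos
  · rintro ⟨x, hxmtb, hxΩ⟩
    obtain ⟨r, hr, hball⟩ := Metric.isOpen_iff.mp hΩ x hxΩ
    obtain ⟨h1, h2⟩ := hxmtb r hr
    have h2' : 0 < volume (Eᶜ ∩ ball x r) := by
      by_contra h0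
      push_neg at h0
      have h0 : volume (Eᶜ ∩ ball x r) = 0 := le_antisymm h0 zero_le
      have hsplit : volume (ball x r ∩ E) + volume (ball x r \ E) = volume (ball x r) :=
        measure_inter_add_diff _ hE
      rw [inter_comm] at hsplit
      rw [Set.diff_eq_compl_inter, h0, add_zero] at hsplit
      exact absurd hsplit h2.ne
    calc (0:ℝ≥0∞) < interL n s (E ∩ ball x r) (Eᶜ ∩ ball x r) :=
          interL_pos' hs.1 hE x hr h1 h2'
      _ ≤ perL n s E Ω :=
          interL_mono' (inter_subset_inter_right E hball) (inter_subset_inter_right Eᶜ hball)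
end

section
/- Let Ω ⊆ ℝⁿ be a bounded open set, E ⊆ ℝⁿ a measurable set with topological boundary ∂E, and s ∈ (0,1). Then 2 P_s^L(E,Ω) ≤ n ω_n ∫_0^∞ |N̄_ρ^Ω(∂E)| ρ^{−(1+s)} dρ, where ω_n is the Lebesgue measure of the unit ball of ℝⁿ. -/
open MeasureTheory Metric Set Filter Bornology
open scoped ENNReal Topology

/-- The closed `ρ`-neighborhood of `Γ` relative to `Ω`: `{x ∈ Ω : dist(x,Γ) ≤ ρ}`. -/
def clNbd (n : ℕ) (ρ : ℝ) (Γ Ω : Set (EuclideanSpace ℝ (Fin n))) :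
    Set (EuclideanSpace ℝ (Fin n)) :=
  {x ∈ Ω | Metric.infDist x Γ ≤ ρ}

/-- The upper `r`-dimensional Minkowski content of `Γ` relative to `Ω`:
`limsup_{ρ→0⁺} |N̄_ρ^Ω(Γ)| / ρ^{n-r}`. -/
noncomputable def upMinkContent (n : ℕ) (r : ℝ) (Γ Ω : Set (EuclideanSpace ℝ (Fin n))) : ℝ≥0∞ :=
  Filter.limsup (fun ρ : ℝ => volume (clNbd n ρ Γ Ω) / ENNReal.ofReal (ρ ^ ((n : ℝ) - r)))
    (𝓝[>] 0)

/-- The upper Minkowski dimension of `Γ` relative to `Ω`: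
`sup {r ∈ [0,n] : M̄^r(Γ,Ω) = ∞}`. -/
noncomputable def upMinkDim (n : ℕ) (Γ Ω : Set (EuclideanSpace ℝ (Fin n))) : ℝ :=
  sSup {r : ℝ | r ∈ Set.Icc (0 : ℝ) n ∧ upMinkContent n r Γ Ω = ⊤}

lemma lintegral_norm_polar (n : ℕ) (hn : 1 ≤ n) (f : ℝ → ℝ≥0∞) (hf : Measurable f) :
    ∫⁻ x : EuclideanSpace ℝ (Fin n), f ‖x‖ =
      (n : ℝ≥0∞) * volume (ball (0 : EuclideanSpace ℝ (Fin n)) 1) *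
        ∫⁻ r in Set.Ioi (0 : ℝ), ENNReal.ofReal (r ^ (n - 1)) * f r := by
  have hdim : Module.finrank ℝ (EuclideanSpace ℝ (Fin n)) = n := finrank_euclideanSpace_fin
  haveI : Nontrivial (EuclideanSpace ℝ (Fin n)) :=
    Module.nontrivial_of_finrank_pos (R := ℝ) (by omega)
  have hm2 : Measurable fun p : sphere (0 : EuclideanSpace ℝ (Fin n)) 1 × Ioi (0 : ℝ) =>
      f p.2.1 := hf.comp (measurable_subtype_coe.comp measurable_snd)
  have h1 : ∫⁻ x : EuclideanSpace ℝ (Fin n), f ‖x‖ =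
      ∫⁻ x : ({0}ᶜ : Set (EuclideanSpace ℝ (Fin n))), f ‖x.1‖
        ∂(Measure.comap Subtype.val volume) := by
    rw [lintegral_subtype_comap (measurableSet_singleton
      (0 : EuclideanSpace ℝ (Fin n))).compl (fun x => f ‖x‖),
      restrict_compl_singleton]
  have h2 : ∫⁻ x : ({0}ᶜ : Set (EuclideanSpace ℝ (Fin n))), f ‖x.1‖
        ∂(Measure.comap Subtype.val volume) =
      ∫⁻ p : sphere (0 : EuclideanSpace ℝ (Fin n)) 1 × Ioi (0 : ℝ), f p.2
        ∂((volume : Measure (EuclideanSpace ℝ (Fin n))).toSphere.prod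
          (.volumeIoiPow (Module.finrank ℝ (EuclideanSpace ℝ (Fin n)) - 1))) := by
    have := (Measure.measurePreserving_homeomorphUnitSphereProd
      (volume : Measure (EuclideanSpace ℝ (Fin n)))).lintegral_comp hm2
    simpa using this
  have h3 : ∫⁻ p : sphere (0 : EuclideanSpace ℝ (Fin n)) 1 × Ioi (0 : ℝ), f p.2
        ∂((volume : Measure (EuclideanSpace ℝ (Fin n))).toSphere.prod
          (.volumeIoiPow (Module.finrank ℝ (EuclideanSpace ℝ (Fin n)) - 1))) =
      (volume : Measure (EuclideanSpace ℝ (Fin n))).toSphere univ *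
        ∫⁻ r : Ioi (0 : ℝ), f r
          ∂(Measure.volumeIoiPow (Module.finrank ℝ (EuclideanSpace ℝ (Fin n)) - 1)) := by
    rw [lintegral_prod _ hm2.aemeasurable]
    simp [lintegral_const, mul_comm]
  have hmc : Measurable fun r : Ioi (0 : ℝ) => f r.1 := hf.comp measurable_subtype_coe
  have h4 : ∫⁻ r : Ioi (0 : ℝ), f r
        ∂(Measure.volumeIoiPow (Module.finrank ℝ (EuclideanSpace ℝ (Fin n)) - 1)) =
      ∫⁻ r in Set.Ioi (0 : ℝ), ENNReal.ofReal (r ^ (n - 1)) * f r := by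
    rw [Measure.volumeIoiPow,
      lintegral_withDensity_eq_lintegral_mul _
        ((measurable_subtype_coe.pow_const _).ennreal_ofReal)
        hmc,
      hdim]
    exact lintegral_subtype_comap measurableSet_Ioi
      (fun a : ℝ => ENNReal.ofReal (a ^ (n - 1)) * f a)
  have h5 : (volume : Measure (EuclideanSpace ℝ (Fin n))).toSphere univ =
      (n : ℝ≥0∞) * volume (ball (0 : EuclideanSpace ℝ (Fin n)) 1) := by
    rw [Measure.toSphere_apply_univ, hdim]
  rw [h1, h2, h3, h4, h5]

lemma infDist_frontier_le (n : ℕ) (V : Set (EuclideanSpace ℝ (Fin n)))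
    {x y : EuclideanSpace ℝ (Fin n)} (hx : x ∈ V) (hy : y ∉ V) :
    Metric.infDist x (frontier V) ≤ ‖x - y‖ := by
  by_contra hcon
  push_neg at hcon
  set r := Metric.infDist x (frontier V) with hr
  have hball : ball x r ⊆ (frontier V)ᶜ := by
    intro z hz hzf
    have h1 : r ≤ dist x z := infDist_le_dist_of_mem hzf
    have h2 : dist x z < r := by rw [dist_comm]; exact mem_ball.mp hz
    exact absurd h2 (not_lt.2 h1)
  have hcompl : (frontier V)ᶜ = interior V ∪ interior Vᶜ := by
    rw [frontier_eq_closure_inter_closure, compl_inter, ← interior_compl, ← interior_compl,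
      compl_compl, union_comm]
  have hsub : ball x r ⊆ interior V ∪ interior Vᶜ := hcompl ▸ hball
  have hdisj : Disjoint (interior V) (interior Vᶜ) :=
    (disjoint_compl_right (a := V)).mono interior_subset interior_subset
  rcases (convex_ball x r).isPreconnected.subset_or_subset isOpen_interior isOpen_interior
      hdisj hsub with h | h
  · have : y ∈ ball x r := by
      rw [mem_ball, dist_comm, dist_eq_norm]
      exact hcon
    exact hy (interior_subset (h this))
  · have hx' : x ∈ ball x r := mem_ball_self ((norm_nonneg _).trans_lt hcon)
    exact (interior_subset (h hx')) hx

/-- translation + polar evaluation of the truncated kernel integral. -/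
lemma kernel_integral_eq (n : ℕ) (hn : 1 ≤ n) (s : ℝ) (x : EuclideanSpace ℝ (Fin n)) (d : ℝ) :
    ∫⁻ y : EuclideanSpace ℝ (Fin n),
        (if d ≤ ‖x - y‖ then ENNReal.ofReal (‖x - y‖ ^ (-((n : ℝ) + s))) else 0) =
      (n : ℝ≥0∞) * volume (ball (0 : EuclideanSpace ℝ (Fin n)) 1) *
        ∫⁻ r in Set.Ioi (0 : ℝ), (if d ≤ r then ENNReal.ofReal (r ^ (-(1 + s))) else 0) := by
  set g : ℝ → ℝ≥0∞ := fun r => if d ≤ r then ENNReal.ofReal (r ^ (-((n : ℝ) + s))) else 0 with hg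
  have hgm : Measurable g := by
    apply Measurable.ite
    · exact measurableSet_Ici
    · exact (measurable_id.pow_const _).ennreal_ofReal
    · exact measurable_const
  have htrans : ∫⁻ y : EuclideanSpace ℝ (Fin n), g ‖x - y‖ =
      ∫⁻ z : EuclideanSpace ℝ (Fin n), g ‖z‖ :=
    (Measure.measurePreserving_sub_left volume x).lintegral_comp (hgm.comp measurable_norm)
  calc ∫⁻ y : EuclideanSpace ℝ (Fin n),
        (if d ≤ ‖x - y‖ then ENNReal.ofReal (‖x - y‖ ^ (-((n : ℝ) + s))) else 0)
      = ∫⁻ z : EuclideanSpace ℝ (Fin n), g ‖z‖ := htrans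
    _ = (n : ℝ≥0∞) * volume (ball (0 : EuclideanSpace ℝ (Fin n)) 1) *
        ∫⁻ r in Set.Ioi (0 : ℝ), ENNReal.ofReal (r ^ (n - 1)) * g r :=
      lintegral_norm_polar n hn g hgm
    _ = (n : ℝ≥0∞) * volume (ball (0 : EuclideanSpace ℝ (Fin n)) 1) *
        ∫⁻ r in Set.Ioi (0 : ℝ), (if d ≤ r then ENNReal.ofReal (r ^ (-(1 + s))) else 0) := by
      congr 1
      refine setLIntegral_congr_fun measurableSet_Ioi ?_
      intro r hr
      have hr0 : (0 : ℝ) < r := hr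
      by_cases hd : d ≤ r
      · simp only [hg, if_pos hd]
        rw [← ENNReal.ofReal_mul (by positivity)]
        congr 1
        rw [← Real.rpow_natCast r (n - 1), ← Real.rpow_add hr0]
        congr 1
        rw [Nat.cast_sub hn]
        push_cast
        ring
      · simp [hg, hd]

/-- Core estimate. -/
lemma core_bound (n : ℕ) (hn : 1 ≤ n) (s : ℝ)
    (A B Γ : Set (EuclideanSpace ℝ (Fin n))) (hA : MeasurableSet A)
    (hsep : ∀ x ∈ A, ∀ y ∈ B, Metric.infDist x Γ ≤ ‖x - y‖) :
    interL n s A B ≤ (n : ℝ≥0∞) * volume (ball (0 : EuclideanSpace ℝ (Fin n)) 1) *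
      ∫⁻ r in Set.Ioi (0 : ℝ),
        volume (A ∩ {x | Metric.infDist x Γ ≤ r}) * ENNReal.ofReal (r ^ (-(1 + s))) := by
  set ω : ℝ≥0∞ := volume (ball (0 : EuclideanSpace ℝ (Fin n)) 1) with hω
  have hωtop : (n : ℝ≥0∞) * ω ≠ ⊤ :=
    ENNReal.mul_ne_top (ENNReal.natCast_ne_top n) measure_ball_lt_top.ne
  have hcm : Measurable fun r : ℝ => ENNReal.ofReal (r ^ (-(1 + s))) :=
    (measurable_id.pow_const _).ennreal_ofReal
  have step1 : ∀ x ∈ A, (∫⁻ y in B, fracKer n s x y) ≤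
      (n : ℝ≥0∞) * ω * ∫⁻ r in Set.Ioi (0 : ℝ),
        (if Metric.infDist x Γ ≤ r then ENNReal.ofReal (r ^ (-(1 + s))) else 0) := by
    intro x hx
    calc ∫⁻ y in B, fracKer n s x y
        ≤ ∫⁻ y in B, (if Metric.infDist x Γ ≤ ‖x - y‖ then
            ENNReal.ofReal (‖x - y‖ ^ (-((n : ℝ) + s))) else 0) := by
          apply setLIntegral_mono
          · exact (Measurable.ite (measurableSet_le measurable_const
              (measurable_const.sub measurable_id).norm)
              ((measurable_const.sub measurable_id).norm.pow_const _).ennreal_ofReal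
              measurable_const)
          · intro y hy
            rw [if_pos (hsep x hx y hy)]
            exact le_rfl
      _ ≤ ∫⁻ y, (if Metric.infDist x Γ ≤ ‖x - y‖ then
            ENNReal.ofReal (‖x - y‖ ^ (-((n : ℝ) + s))) else 0) :=
          setLIntegral_le_lintegral _ _
      _ = (n : ℝ≥0∞) * ω * ∫⁻ r in Set.Ioi (0 : ℝ),
            (if Metric.infDist x Γ ≤ r then ENNReal.ofReal (r ^ (-(1 + s))) else 0) :=
          kernel_integral_eq n hn s x _
  have hFm : Measurable fun p : EuclideanSpace ℝ (Fin n) × ℝ =>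
      (if Metric.infDist p.1 Γ ≤ p.2 then ENNReal.ofReal (p.2 ^ (-(1 + s))) else 0) := by
    apply Measurable.ite
    · exact measurableSet_le ((continuous_infDist_pt Γ).comp continuous_fst).measurable
        measurable_snd
    · exact hcm.comp measurable_snd
    · exact measurable_const
  calc interL n s A B
      ≤ ∫⁻ x in A, (n : ℝ≥0∞) * ω * ∫⁻ r in Set.Ioi (0 : ℝ),
          (if Metric.infDist x Γ ≤ r then ENNReal.ofReal (r ^ (-(1 + s))) else 0) :=
        setLIntegral_mono_ae (by
          exact (Measurable.const_mul (by
            exact Measurable.lintegral_prod_right (f := fun x r =>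
              (if Metric.infDist x Γ ≤ r then ENNReal.ofReal (r ^ (-(1 + s))) else 0)) hFm) _).aemeasurable)
          (Filter.Eventually.of_forall step1)
    _ = (n : ℝ≥0∞) * ω * ∫⁻ x in A, ∫⁻ r in Set.Ioi (0 : ℝ),
          (if Metric.infDist x Γ ≤ r then ENNReal.ofReal (r ^ (-(1 + s))) else 0) :=
        lintegral_const_mul' _ _ hωtop
    _ = (n : ℝ≥0∞) * ω * ∫⁻ r in Set.Ioi (0 : ℝ), ∫⁻ x in A,
          (if Metric.infDist x Γ ≤ r then ENNReal.ofReal (r ^ (-(1 + s))) else 0) := by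
        congr 1
        exact lintegral_lintegral_swap hFm.aemeasurable
    _ = (n : ℝ≥0∞) * ω * ∫⁻ r in Set.Ioi (0 : ℝ),
          volume (A ∩ {x | Metric.infDist x Γ ≤ r}) * ENNReal.ofReal (r ^ (-(1 + s))) := by
        congr 1
        refine setLIntegral_congr_fun measurableSet_Ioi ?_
        intro r _
        have hS : MeasurableSet {x : EuclideanSpace ℝ (Fin n) | Metric.infDist x Γ ≤ r} :=
          measurableSet_le (continuous_infDist_pt Γ).measurable measurable_const
        have : (fun x : EuclideanSpace ℝ (Fin n) =>
            (if Metric.infDist x Γ ≤ r then ENNReal.ofReal (r ^ (-(1 + s))) else 0)) =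
            ({x : EuclideanSpace ℝ (Fin n) | Metric.infDist x Γ ≤ r}).indicator
              (fun _ => ENNReal.ofReal (r ^ (-(1 + s)))) := by
          ext z; simp [Set.indicator_apply]
        beta_reduce
        rw [this, lintegral_indicator hS, setLIntegral_const,
          Measure.restrict_apply hS, Set.inter_comm, mul_comm]

lemma interL_symm (n : ℕ) (s : ℝ) (A B : Set (EuclideanSpace ℝ (Fin n))) :
    interL n s A B = interL n s B A := by
  have hker : Measurable fun p : EuclideanSpace ℝ (Fin n) × EuclideanSpace ℝ (Fin n) =>
      fracKer n s p.1 p.2 :=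
    ((measurable_fst.sub measurable_snd).norm.pow_const _).ennreal_ofReal
  unfold interL
  rw [lintegral_lintegral_swap hker.aemeasurable]
  refine lintegral_congr fun y => lintegral_congr fun x => ?_
  unfold fracKer
  rw [norm_sub_rev]

/-- For a bounded open `Ω`, a measurable `E` and `s ∈ (0,1)`:
`2 P_s^L(E,Ω) ≤ n ω_n ∫_0^∞ |N̄_ρ^Ω(∂E)| ρ^{-(1+s)} dρ`. -/
theorem two_perL_le_nbd_integral (n : ℕ) (hn : 1 ≤ n) (Ω : Set (EuclideanSpace ℝ (Fin n)))
    (hΩo : IsOpen Ω) (hΩb : IsBounded Ω) (E : Set (EuclideanSpace ℝ (Fin n)))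
    (hE : MeasurableSet E) (s : ℝ) (hs : s ∈ Set.Ioo (0 : ℝ) 1) :
    2 * perL n s E Ω ≤
      (n : ℝ≥0∞) * volume (ball (0 : EuclideanSpace ℝ (Fin n)) 1) *
        ∫⁻ ρ in Set.Ioi (0 : ℝ),
          volume (clNbd n ρ (frontier E) Ω) * ENNReal.ofReal (ρ ^ (-(1 + s))) := by
  set ω : ℝ≥0∞ := volume (ball (0 : EuclideanSpace ℝ (Fin n)) 1) with hω
  have hsep1 : ∀ x ∈ E ∩ Ω, ∀ y ∈ Eᶜ ∩ Ω, Metric.infDist x (frontier E) ≤ ‖x - y‖ :=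
    fun x hx y hy => infDist_frontier_le n E hx.1 hy.1
  have hsep2 : ∀ x ∈ Eᶜ ∩ Ω, ∀ y ∈ E ∩ Ω, Metric.infDist x (frontier E) ≤ ‖x - y‖ := by
    intro x hx y hy
    have := infDist_frontier_le n Eᶜ hx.1 (by simpa using hy.1)
    rwa [frontier_compl] at this
  have h1 := core_bound n hn s (E ∩ Ω) (Eᶜ ∩ Ω) (frontier E) (hE.inter hΩo.measurableSet) hsep1
  have h2 := core_bound n hn s (Eᶜ ∩ Ω) (E ∩ Ω) (frontier E)
    (hE.compl.inter hΩo.measurableSet) hsep2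
  have hsymm : interL n s (E ∩ Ω) (Eᶜ ∩ Ω) = interL n s (Eᶜ ∩ Ω) (E ∩ Ω) := interL_symm n s _ _
  set S : ℝ → Set (EuclideanSpace ℝ (Fin n)) :=
    fun r => {x | Metric.infDist x (frontier E) ≤ r} with hS
  have hf1m : Measurable fun r : ℝ =>
      volume ((E ∩ Ω) ∩ S r) * ENNReal.ofReal (r ^ (-(1 + s))) := by
    refine Measurable.mul ?_ ((measurable_id.pow_const _).ennreal_ofReal)
    refine Monotone.measurable fun r r' hrr' => measure_mono ?_
    exact Set.inter_subset_inter_right _ fun x hx => le_trans hx hrr'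
  have key : ∀ r : ℝ, volume ((E ∩ Ω) ∩ S r) + volume ((Eᶜ ∩ Ω) ∩ S r) =
      volume (clNbd n r (frontier E) Ω) := by
    intro r
    have e1 : (E ∩ Ω) ∩ S r = (clNbd n r (frontier E) Ω) ∩ E := by
      ext z; simp only [clNbd, Set.mem_inter_iff, Set.mem_setOf_eq, Set.mem_sep_iff, hS]; tauto
    have e2 : (Eᶜ ∩ Ω) ∩ S r = (clNbd n r (frontier E) Ω) \ E := by
      ext z; simp only [clNbd, Set.mem_inter_iff, Set.mem_setOf_eq, Set.mem_sep_iff,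
        Set.mem_diff, Set.mem_compl_iff, hS]; tauto
    rw [e1, e2, measure_inter_add_diff _ hE]
  calc 2 * perL n s E Ω
      = interL n s (E ∩ Ω) (Eᶜ ∩ Ω) + interL n s (Eᶜ ∩ Ω) (E ∩ Ω) := by
        rw [perL, two_mul, hsymm]
    _ ≤ ((n : ℝ≥0∞) * ω * ∫⁻ r in Set.Ioi (0 : ℝ),
          volume ((E ∩ Ω) ∩ S r) * ENNReal.ofReal (r ^ (-(1 + s)))) +
        ((n : ℝ≥0∞) * ω * ∫⁻ r in Set.Ioi (0 : ℝ),
          volume ((Eᶜ ∩ Ω) ∩ S r) * ENNReal.ofReal (r ^ (-(1 + s)))) := add_le_add h1 h2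
    _ = (n : ℝ≥0∞) * ω * ∫⁻ r in Set.Ioi (0 : ℝ),
          (volume ((E ∩ Ω) ∩ S r) * ENNReal.ofReal (r ^ (-(1 + s))) +
            volume ((Eᶜ ∩ Ω) ∩ S r) * ENNReal.ofReal (r ^ (-(1 + s)))) := by
        rw [← mul_add, lintegral_add_left hf1m]
    _ = (n : ℝ≥0∞) * ω * ∫⁻ r in Set.Ioi (0 : ℝ),
          volume (clNbd n r (frontier E) Ω) * ENNReal.ofReal (r ^ (-(1 + s))) := by
        congr 1
        refine lintegral_congr fun r => ?_
        rw [← add_mul, key r]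
end

section
/- Let Ω ⊆ ℝⁿ be a bounded open set, E ⊆ ℝⁿ a measurable set with topological boundary ∂E, and r ∈ (0,1). If limsup_{ρ→0⁺} |N̄_ρ^Ω(∂E)| / ρ^r < ∞, then P_s^L(E,Ω) < ∞ for every s ∈ (0,r). -/
open MeasureTheory Metric Set Filter Bornology
open scoped ENNReal Topology

/-! Auxiliary lemmas -/


private lemma exists_pow_two_bound {t : ℝ} (ht : 1 ≤ t) :
    ∃ k : ℕ, (2:ℝ)^k ≤ t ∧ t < 2^(k+1) := by
  classical
  have h : ∃ m : ℕ, t < 2^m := pow_unbounded_of_one_lt t one_lt_two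
  have hm : t < 2 ^ Nat.find h := Nat.find_spec h
  have hm0 : Nat.find h ≠ 0 := by
    intro h0
    rw [h0] at hm
    norm_num at hm
    linarith
  obtain ⟨k, hk⟩ := Nat.exists_eq_succ_of_ne_zero hm0
  refine ⟨k, le_of_not_gt (Nat.find_min h (by omega)), by rw [← Nat.succ_eq_add_one, ← hk]; exact hm⟩

private lemma exists_half_pow {t : ℝ} (ht0 : 0 < t) (ht1 : t ≤ 1) :
    ∃ k : ℕ, (2⁻¹:ℝ)^(k+1) < t ∧ t ≤ 2⁻¹^k := by
  obtain ⟨k, hk1, hk2⟩ := exists_pow_two_bound ((one_le_inv₀ ht0).2 ht1)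
  have hp1 : (0:ℝ) < 2 ^ (k+1) := by positivity
  have hp0 : (0:ℝ) < 2 ^ k := by positivity
  refine ⟨k, ?_, ?_⟩
  · rw [inv_pow, inv_lt_iff_one_lt_mul₀ hp1]
    nlinarith [mul_lt_mul_of_pos_left hk2 ht0, mul_inv_cancel₀ ht0.ne']
  · rw [inv_pow, le_inv_comm₀ ht0 hp0]
    nlinarith [mul_le_mul_of_nonneg_left hk1 ht0.le, mul_inv_cancel₀ ht0.ne']

/-- geometric-series constant for the kernel tail bound. -/
noncomputable def Cker (n : ℕ) (s : ℝ) : ℝ≥0∞ :=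
  volume (ball (0 : EuclideanSpace ℝ (Fin n)) 1) * ENNReal.ofReal ((2:ℝ)^(n:ℝ)) *
    (1 - ENNReal.ofReal ((2:ℝ)^(-s)))⁻¹

lemma Cker_ne_top (n : ℕ) {s : ℝ} (hs : 0 < s) : Cker n s ≠ ⊤ := by
  have h1 : (2:ℝ)^(-s) < 1 := Real.rpow_lt_one_of_one_lt_of_neg one_lt_two (by linarith)
  have h2 : (1 : ℝ≥0∞) - ENNReal.ofReal ((2:ℝ)^(-s)) ≠ 0 := by
    rw [← pos_iff_ne_zero, tsub_pos_iff_lt]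
    exact lt_of_lt_of_le (ENNReal.ofReal_lt_one.2 h1) le_rfl
  exact ENNReal.mul_ne_top (ENNReal.mul_ne_top measure_ball_lt_top.ne ENNReal.ofReal_ne_top)
    (ENNReal.inv_ne_top.2 h2)

lemma kernel_tail (n : ℕ) {s : ℝ} (hs : 0 < s) (x : EuclideanSpace ℝ (Fin n)) {d : ℝ}
    (hd : 0 < d) :
    ∫⁻ y in {y | d ≤ dist x y}, fracKer n s x y ≤ Cker n s * ENNReal.ofReal (d ^ (-s)) := by
  have h2 : (0:ℝ) < 2 := two_pos
  set V := volume (ball (0 : EuclideanSpace ℝ (Fin n)) 1) with hV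
  set S : ℕ → Set (EuclideanSpace ℝ (Fin n)) :=
    fun k => closedBall x ((2:ℝ)^(k+1) * d) \ ball x ((2:ℝ)^k * d) with hS
  have hcov : {y | d ≤ dist x y} ⊆ ⋃ k : ℕ, S k := by
    intro y hy
    have h1 : 1 ≤ dist x y / d := (one_le_div hd).2 hy
    obtain ⟨k, hk1, hk2⟩ := exists_pow_two_bound h1
    rw [le_div_iff₀ hd] at hk1
    rw [div_lt_iff₀ hd] at hk2
    refine mem_iUnion.2 ⟨k, ⟨?_, ?_⟩⟩
    · exact mem_closedBall.2 (by rw [dist_comm]; linarith)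
    · intro h
      rw [mem_ball, dist_comm] at h
      linarith
  have hge_key : ∀ k : ℕ, ∀ y ∈ S k, (2:ℝ)^k * d ≤ ‖x - y‖ := by
    intro k y hy
    have h := hy.2
    rw [mem_ball, dist_comm] at h
    rw [← dist_eq_norm]
    linarith [not_lt.1 h]
  have key : ∀ k : ℕ, ((2:ℝ)^k * d) ^ (-((n:ℝ)+s)) * ((2:ℝ)^(k+1) * d) ^ (n:ℝ)
      = ((2:ℝ)^(n:ℝ) * d ^ (-s)) * ((2:ℝ)^(-s))^k := by
    intro k
    have e1 : ((2:ℝ)^k * d) ^ (-((n:ℝ)+s)) = (2:ℝ)^((k:ℝ)*(-((n:ℝ)+s))) * d ^ (-((n:ℝ)+s)) := by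
      rw [Real.mul_rpow (by positivity) hd.le, ← Real.rpow_natCast (2:ℝ) k,
        ← Real.rpow_mul h2.le]
    have e2 : ((2:ℝ)^(k+1) * d) ^ (n:ℝ) = (2:ℝ)^(((k:ℝ)+1)*(n:ℝ)) * d ^ (n:ℝ) := by
      rw [Real.mul_rpow (by positivity) hd.le, ← Real.rpow_natCast (2:ℝ) (k+1),
        ← Real.rpow_mul h2.le]
      push_cast
      ring_nf
    have e3 : ((2:ℝ)^(-s))^k = (2:ℝ)^((-s)*(k:ℝ)) := by
      rw [← Real.rpow_natCast ((2:ℝ)^(-s)) k, ← Real.rpow_mul h2.le]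
    rw [e1, e2, e3, mul_mul_mul_comm, ← Real.rpow_add h2, ← Real.rpow_add hd]
    have hA : (k:ℝ)*(-((n:ℝ)+s)) + ((k:ℝ)+1)*(n:ℝ) = (n:ℝ) + (-s)*(k:ℝ) := by ring
    have hB : (-((n:ℝ)+s)) + (n:ℝ) = -s := by ring
    rw [hA, hB, Real.rpow_add h2]
    ring
  have hterm : ∀ k : ℕ, (∫⁻ y in S k, fracKer n s x y)
      ≤ (ENNReal.ofReal ((2:ℝ)^(n:ℝ) * d ^ (-s)) * V) * ENNReal.ofReal ((2:ℝ)^(-s)) ^ k := by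
    intro k
    have hmeas : MeasurableSet (S k) := measurableSet_closedBall.diff measurableSet_ball
    have hpt : ∀ y ∈ S k,
        fracKer n s x y ≤ ENNReal.ofReal (((2:ℝ)^k * d) ^ (-((n:ℝ) + s))) := by
      intro y hy
      exact ENNReal.ofReal_le_ofReal
        (Real.rpow_le_rpow_of_nonpos (by positivity) (hge_key k y hy)
          (neg_nonpos.2 (by positivity)))
    calc (∫⁻ y in S k, fracKer n s x y)
        ≤ ∫⁻ _ in S k, ENNReal.ofReal (((2:ℝ)^k * d) ^ (-((n:ℝ) + s))) :=
          setLIntegral_mono' hmeas hpt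
      _ = ENNReal.ofReal (((2:ℝ)^k * d) ^ (-((n:ℝ) + s))) * volume (S k) :=
          setLIntegral_const _ _
      _ ≤ ENNReal.ofReal (((2:ℝ)^k * d) ^ (-((n:ℝ) + s)))
            * volume (closedBall x ((2:ℝ)^(k+1) * d)) := by
          exact mul_le_mul_right (measure_mono diff_subset) _
      _ = ENNReal.ofReal (((2:ℝ)^k * d) ^ (-((n:ℝ) + s)))
            * (ENNReal.ofReal (((2:ℝ)^(k+1) * d) ^ (n:ℝ)) * V) := by
          rw [MeasureTheory.Measure.addHaar_closedBall volume x (by positivity)]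
          congr 2
          rw [finrank_euclideanSpace_fin, Real.rpow_natCast]
      _ = (ENNReal.ofReal ((2:ℝ)^(n:ℝ) * d ^ (-s)) * V) * ENNReal.ofReal ((2:ℝ)^(-s)) ^ k := by
          rw [← mul_assoc, ← ENNReal.ofReal_mul (by positivity), key k,
            ENNReal.ofReal_mul (by positivity), ← ENNReal.ofReal_pow (by positivity)]
          ring
  calc (∫⁻ y in {y | d ≤ dist x y}, fracKer n s x y)
      ≤ ∫⁻ y in ⋃ k : ℕ, S k, fracKer n s x y := lintegral_mono_set hcov
    _ ≤ ∑' k : ℕ, ∫⁻ y in S k, fracKer n s x y := lintegral_iUnion_le _ _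
    _ ≤ ∑' k : ℕ, (ENNReal.ofReal ((2:ℝ)^(n:ℝ) * d ^ (-s)) * V)
          * ENNReal.ofReal ((2:ℝ)^(-s)) ^ k := ENNReal.tsum_le_tsum hterm
    _ = (ENNReal.ofReal ((2:ℝ)^(n:ℝ) * d ^ (-s)) * V)
          * (1 - ENNReal.ofReal ((2:ℝ)^(-s)))⁻¹ := by
        rw [ENNReal.tsum_mul_left, ENNReal.tsum_geometric]
    _ = Cker n s * ENNReal.ofReal (d ^ (-s)) := by
        rw [Cker, ENNReal.ofReal_mul (by positivity), hV]
        ring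

lemma distInt_lt_top (n : ℕ) (Γ Ω : Set (EuclideanSpace ℝ (Fin n))) (hΩo : IsOpen Ω)
    (hΩb : IsBounded Ω) {s r : ℝ} (hs : 0 < s) (hsr : s < r) {M : ℝ≥0∞} (hM : M ≠ ⊤)
    {ρ₀ : ℝ} (hρ₀ : 0 < ρ₀)
    (hbd : ∀ ρ : ℝ, 0 < ρ → ρ ≤ ρ₀ → volume (clNbd n ρ Γ Ω) ≤ M * ENNReal.ofReal (ρ ^ r)) :
    ∫⁻ x in {x ∈ Ω | 0 < infDist x Γ}, ENNReal.ofReal (infDist x Γ ^ (-s)) < ⊤ := by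
  have h2 : (0:ℝ) < 2 := two_pos
  set D : EuclideanSpace ℝ (Fin n) → ℝ := fun x => infDist x Γ with hD
  have hDc : Continuous D := continuous_infDist_pt Γ
  set B : Set (EuclideanSpace ℝ (Fin n)) := Ω ∩ D ⁻¹' (Ioi ρ₀) with hB
  set A : ℕ → Set (EuclideanSpace ℝ (Fin n)) :=
    fun k => Ω ∩ D ⁻¹' (Ioc (ρ₀ * (2⁻¹:ℝ)^(k+1)) (ρ₀ * (2⁻¹:ℝ)^k)) with hA
  have hBm : MeasurableSet B := hΩo.measurableSet.inter (hDc.measurable measurableSet_Ioi)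
  have hAm : ∀ k, MeasurableSet (A k) :=
    fun k => hΩo.measurableSet.inter (hDc.measurable measurableSet_Ioc)
  have hcov : {x ∈ Ω | 0 < D x} ⊆ B ∪ ⋃ k, A k := by
    intro x hx
    by_cases hle : D x ≤ ρ₀
    · right
      have ht0 : 0 < D x / ρ₀ := div_pos hx.2 hρ₀
      have ht1 : D x / ρ₀ ≤ 1 := (div_le_one hρ₀).2 hle
      obtain ⟨k, hk1, hk2⟩ := exists_half_pow ht0 ht1
      rw [lt_div_iff₀ hρ₀] at hk1
      rw [div_le_iff₀ hρ₀] at hk2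
      refine mem_iUnion.2 ⟨k, hx.1, ?_, ?_⟩
      · rw [mul_comm]; exact hk1
      · rw [mul_comm]; exact hk2
    · exact Or.inl ⟨hx.1, not_le.1 hle⟩
  have hc : ∀ m : ℕ, (2⁻¹:ℝ)^m = (2:ℝ)^(-(m:ℝ)) := by
    intro m
    rw [← Real.rpow_natCast (2⁻¹:ℝ) m, ← Real.rpow_neg_one (2:ℝ), ← Real.rpow_mul h2.le]
    norm_num
  have key2 : ∀ k : ℕ, (ρ₀ * (2⁻¹:ℝ)^(k+1))^(-s) * (ρ₀ * (2⁻¹:ℝ)^k)^r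
      = (ρ₀^(r-s) * (2:ℝ)^s) * ((2:ℝ)^(-(r-s)))^k := by
    intro k
    have e1 : (ρ₀ * (2⁻¹:ℝ)^(k+1))^(-s) = ρ₀^(-s) * (2:ℝ)^((-(((k+1):ℕ):ℝ))*(-s)) := by
      rw [hc (k+1), Real.mul_rpow hρ₀.le (by positivity), Real.rpow_neg h2.le,
        ← Real.rpow_neg_one ((2:ℝ)^(((k+1):ℕ):ℝ)), ← Real.rpow_mul (by positivity),
        ← Real.rpow_mul h2.le]
      ring_nf
    have e2 : (ρ₀ * (2⁻¹:ℝ)^k)^r = ρ₀^r * (2:ℝ)^((-(k:ℝ))*r) := by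
      rw [hc k, Real.mul_rpow hρ₀.le (by positivity), Real.rpow_neg h2.le,
        ← Real.rpow_neg_one ((2:ℝ)^((k:ℕ):ℝ)), ← Real.rpow_mul (by positivity),
        ← Real.rpow_mul h2.le]
      ring_nf
    have e3 : ((2:ℝ)^(-(r-s)))^k = (2:ℝ)^((-(r-s))*(k:ℝ)) := by
      rw [← Real.rpow_natCast ((2:ℝ)^(-(r-s))) k, ← Real.rpow_mul h2.le]
    rw [e1, e2, e3, mul_mul_mul_comm, ← Real.rpow_add hρ₀, ← Real.rpow_add h2]
    have hA' : (-s) + r = r - s := by ring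
    have hB' : (-(((k+1):ℕ):ℝ))*(-s) + (-(k:ℝ))*r = s + (-(r-s))*(k:ℝ) := by
      push_cast; ring
    rw [hA', hB', Real.rpow_add h2]
    ring
  have htermA : ∀ k : ℕ, (∫⁻ x in A k, ENNReal.ofReal (D x ^ (-s)))
      ≤ (M * ENNReal.ofReal (ρ₀^(r-s) * (2:ℝ)^s)) * ENNReal.ofReal ((2:ℝ)^(-(r-s)))^k := by
    intro k
    have hpos : (0:ℝ) < ρ₀ * (2⁻¹:ℝ)^(k+1) := by positivity
    calc (∫⁻ x in A k, ENNReal.ofReal (D x ^ (-s)))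
        ≤ ∫⁻ _ in A k, ENNReal.ofReal ((ρ₀ * (2⁻¹:ℝ)^(k+1)) ^ (-s)) := by
          refine setLIntegral_mono' (hAm k) (fun x hx => ENNReal.ofReal_le_ofReal ?_)
          exact Real.rpow_le_rpow_of_nonpos hpos hx.2.1.le (neg_nonpos.2 hs.le)
      _ = ENNReal.ofReal ((ρ₀ * (2⁻¹:ℝ)^(k+1)) ^ (-s)) * volume (A k) :=
          setLIntegral_const _ _
      _ ≤ ENNReal.ofReal ((ρ₀ * (2⁻¹:ℝ)^(k+1)) ^ (-s))
            * (M * ENNReal.ofReal ((ρ₀ * (2⁻¹:ℝ)^k) ^ r)) := by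
          refine mul_le_mul_right (le_trans (measure_mono ?_) (hbd _ (by positivity) ?_)) _
          · exact fun x hx => ⟨hx.1, hx.2.2⟩
          · have hle1 : (2⁻¹:ℝ)^k ≤ 1 := pow_le_one₀ (by norm_num) (by norm_num)
            nlinarith
      _ = M * (ENNReal.ofReal ((ρ₀ * (2⁻¹:ℝ)^(k+1)) ^ (-s))
            * ENNReal.ofReal ((ρ₀ * (2⁻¹:ℝ)^k) ^ r)) := by ring
      _ = M * ENNReal.ofReal ((ρ₀ * (2⁻¹:ℝ)^(k+1)) ^ (-s) * (ρ₀ * (2⁻¹:ℝ)^k) ^ r) := by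
          rw [← ENNReal.ofReal_mul (by positivity)]
      _ = M * ENNReal.ofReal ((ρ₀^(r-s) * (2:ℝ)^s) * ((2:ℝ)^(-(r-s)))^k) := by rw [key2 k]
      _ = (M * ENNReal.ofReal (ρ₀^(r-s) * (2:ℝ)^s)) * ENNReal.ofReal ((2:ℝ)^(-(r-s)))^k := by
          rw [ENNReal.ofReal_mul (by positivity), ← ENNReal.ofReal_pow (by positivity)]
          ring
  have hq1 : ENNReal.ofReal ((2:ℝ)^(-(r-s))) < 1 := by
    refine ENNReal.ofReal_lt_one.2 (Real.rpow_lt_one_of_one_lt_of_neg one_lt_two (by linarith))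
  calc (∫⁻ x in {x ∈ Ω | 0 < infDist x Γ}, ENNReal.ofReal (infDist x Γ ^ (-s)))
      ≤ ∫⁻ x in B ∪ ⋃ k, A k, ENNReal.ofReal (D x ^ (-s)) := lintegral_mono_set hcov
    _ ≤ (∫⁻ x in B, ENNReal.ofReal (D x ^ (-s)))
          + ∫⁻ x in ⋃ k, A k, ENNReal.ofReal (D x ^ (-s)) := lintegral_union_le _ _ _
    _ ≤ ENNReal.ofReal (ρ₀ ^ (-s)) * volume Ω
          + (M * ENNReal.ofReal (ρ₀^(r-s) * (2:ℝ)^s))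
              * (1 - ENNReal.ofReal ((2:ℝ)^(-(r-s))))⁻¹ := by
        refine add_le_add ?_ ?_
        · calc (∫⁻ x in B, ENNReal.ofReal (D x ^ (-s)))
              ≤ ∫⁻ _ in B, ENNReal.ofReal (ρ₀ ^ (-s)) := by
                refine setLIntegral_mono' hBm (fun x hx => ENNReal.ofReal_le_ofReal ?_)
                exact Real.rpow_le_rpow_of_nonpos hρ₀ hx.2.le (neg_nonpos.2 hs.le)
            _ = ENNReal.ofReal (ρ₀ ^ (-s)) * volume B := setLIntegral_const _ _
            _ ≤ ENNReal.ofReal (ρ₀ ^ (-s)) * volume Ω :=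
                mul_le_mul_right (measure_mono inter_subset_left) _
        · calc (∫⁻ x in ⋃ k, A k, ENNReal.ofReal (D x ^ (-s)))
              ≤ ∑' k : ℕ, ∫⁻ x in A k, ENNReal.ofReal (D x ^ (-s)) := lintegral_iUnion_le _ _
            _ ≤ ∑' k : ℕ, (M * ENNReal.ofReal (ρ₀^(r-s) * (2:ℝ)^s))
                  * ENNReal.ofReal ((2:ℝ)^(-(r-s)))^k := ENNReal.tsum_le_tsum htermA
            _ = _ := by rw [ENNReal.tsum_mul_left, ENNReal.tsum_geometric]
    _ < ⊤ := by
        refine ENNReal.add_lt_top.2 ⟨?_, ?_⟩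
        · exact ENNReal.mul_lt_top ENNReal.ofReal_lt_top hΩb.measure_lt_top
        · refine ENNReal.mul_lt_top (ENNReal.mul_lt_top hM.lt_top ENNReal.ofReal_lt_top) ?_
          rw [lt_top_iff_ne_top, ENNReal.inv_ne_top, ← pos_iff_ne_zero, tsub_pos_iff_lt]
          exact hq1

lemma infDist_frontier_le_dist {n : ℕ} {E : Set (EuclideanSpace ℝ (Fin n))} {x y : EuclideanSpace ℝ (Fin n)}
    (hx : x ∈ E) (hy : y ∉ E) : infDist x (frontier E) ≤ dist x y := by
  by_cases hxf : x ∈ frontier E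
  · exact le_trans (by simp [infDist_zero_of_mem hxf]) dist_nonneg
  by_cases hyf : y ∈ frontier E
  · exact infDist_le_dist_of_mem hyf
  rcases em ((segment ℝ x y ∩ frontier E).Nonempty) with ⟨z, hz, hzf⟩ | hne
  · refine le_trans (infDist_le_dist_of_mem hzf) ?_
    have h := dist_add_dist_of_mem_segment hz
    linarith [dist_nonneg (x := z) (y := y)]
  exfalso
  have hx' : x ∈ interior E := by
    rw [← self_diff_frontier]
    exact ⟨hx, hxf⟩
  have hy' : y ∈ (closure E)ᶜ := by
    intro hyc
    exact hyf ⟨hyc, fun hyi => hy (interior_subset hyi)⟩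
  have hsub : segment ℝ x y ⊆ interior E ∪ (closure E)ᶜ := by
    intro z hz
    have hzf : z ∉ frontier E := fun h => hne ⟨z, hz, h⟩
    by_cases hc : z ∈ closure E
    · left
      rw [← self_diff_frontier]
      have : z ∈ E ∪ frontier E := by
        rw [← closure_eq_self_union_frontier]; exact hc
      rcases this with h | h
      · exact ⟨h, hzf⟩
      · exact absurd h hzf
    · exact Or.inr hc
  have hpre : IsPreconnected (segment ℝ x y) := (convex_segment x y).isPreconnected
  obtain ⟨z, _, hz1, hz2⟩ := hpre (interior E) (closure E)ᶜ isOpen_interior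
    isClosed_closure.isOpen_compl hsub ⟨x, left_mem_segment ℝ x y, hx'⟩
    ⟨y, right_mem_segment ℝ x y, hy'⟩
  exact hz2 (subset_closure (interior_subset hz1))

/-- If `limsup_{ρ→0⁺} |N̄_ρ^Ω(∂E)|/ρ^r < ∞`, then `P_s^L(E,Ω) < ∞`
for every `s ∈ (0,r)`. -/
theorem perL_lt_top_of_minkContent (n : ℕ) (hn : 1 ≤ n) (Ω : Set (EuclideanSpace ℝ (Fin n)))
    (hΩo : IsOpen Ω) (hΩb : IsBounded Ω) (E : Set (EuclideanSpace ℝ (Fin n)))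
    (hE : MeasurableSet E) (r : ℝ) (hr : r ∈ Set.Ioo (0 : ℝ) 1)
    (hfin : Filter.limsup
        (fun ρ : ℝ => volume (clNbd n ρ (frontier E) Ω) / ENNReal.ofReal (ρ ^ r))
        (𝓝[>] 0) < ⊤) :
    ∀ s ∈ Set.Ioo (0 : ℝ) r, perL n s E Ω < ⊤ := by
  obtain ⟨hr0, hr1⟩ := hr
  intro s hsmem
  obtain ⟨hs0, hsr⟩ := hsmem
  by_cases hfr : (frontier E).Nonempty
  swap
  · have hcl : IsClopen E := isClopen_iff_frontier_eq_empty.2 (not_nonempty_iff_eq_empty.1 hfr)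
    rcases isClopen_iff.1 hcl with rfl | rfl
    · simp [perL, interL]
    · simp [perL, interL]
  set f := fun ρ : ℝ => volume (clNbd n ρ (frontier E) Ω) / ENNReal.ofReal (ρ ^ r) with hf
  set M := limsup f (𝓝[>] (0:ℝ)) + 1 with hM
  have hMt : M ≠ ⊤ := ENNReal.add_ne_top.2 ⟨hfin.ne, ENNReal.one_ne_top⟩
  have hlt : limsup f (𝓝[>] (0:ℝ)) < M := ENNReal.lt_add_right hfin.ne one_ne_zero
  have hev : ∀ᶠ ρ in 𝓝[>] (0:ℝ), f ρ < M := Filter.eventually_lt_of_limsup_lt hlt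
  obtain ⟨ρ₀, hρ₀pos, hρ₀⟩ : ∃ ρ₀ > (0:ℝ), ∀ ρ, 0 < ρ → ρ ≤ ρ₀ → f ρ < M := by
    rw [eventually_nhdsWithin_iff, Metric.eventually_nhds_iff] at hev
    obtain ⟨ε, hε, h⟩ := hev
    refine ⟨ε/2, by linarith, fun ρ h1 h2 => h ?_ h1⟩
    rw [Real.dist_eq, sub_zero, abs_of_pos h1]
    linarith
  have hbd : ∀ ρ : ℝ, 0 < ρ → ρ ≤ ρ₀ →
      volume (clNbd n ρ (frontier E) Ω) ≤ M * ENNReal.ofReal (ρ ^ r) := by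
    intro ρ h1 h2
    have h3 := (hρ₀ ρ h1 h2).le
    rw [ENNReal.div_le_iff_le_mul
      (Or.inl (ENNReal.ofReal_pos.2 (Real.rpow_pos_of_pos h1 r)).ne')
      (Or.inl ENNReal.ofReal_ne_top)] at h3
    exact h3
  have hfr_closed : IsClosed (frontier E) := isClosed_frontier
  have hnull : volume (frontier E ∩ Ω) = 0 := by
    have hev2 : ∀ᶠ ρ in 𝓝[>] (0:ℝ),
        volume (frontier E ∩ Ω) ≤ M * ENNReal.ofReal (ρ ^ r) := by
      filter_upwards [Ioc_mem_nhdsGT_of_mem (Set.mem_Ico.2 ⟨le_refl (0:ℝ), hρ₀pos⟩)] with ρ hρ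
      refine le_trans (measure_mono ?_) (hbd ρ hρ.1 hρ.2)
      intro x hx
      exact ⟨hx.2, le_trans (le_of_eq (infDist_zero_of_mem hx.1)) hρ.1.le⟩
    have h1 : Tendsto (fun ρ : ℝ => ρ ^ r) (𝓝[>] (0:ℝ)) (𝓝 0) := by
      have h := (Real.continuousAt_rpow_const 0 r (Or.inr hr0.le)).tendsto
      rw [Real.zero_rpow hr0.ne'] at h
      exact h.mono_left nhdsWithin_le_nhds
    have htend : Tendsto (fun ρ : ℝ => M * ENNReal.ofReal (ρ ^ r)) (𝓝[>] (0:ℝ)) (𝓝 0) := by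
      have h2 : Tendsto (fun ρ : ℝ => ENNReal.ofReal (ρ ^ r)) (𝓝[>] (0:ℝ)) (𝓝 0) := by
        simpa [Function.comp_def] using (ENNReal.continuous_ofReal.tendsto 0).comp h1
      simpa using ENNReal.Tendsto.const_mul h2 (Or.inr hMt)
    exact le_antisymm (ge_of_tendsto htend hev2) zero_le
  have hEΩ : MeasurableSet (E ∩ Ω) := hE.inter hΩo.measurableSet
  have hset : MeasurableSet ((E ∩ Ω) \ frontier E) := hEΩ.diff hfr_closed.measurableSet
  have hpt : ∀ x ∈ (E ∩ Ω) \ frontier E,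
      (∫⁻ y in Eᶜ ∩ Ω, fracKer n s x y)
        ≤ Cker n s * ENNReal.ofReal (infDist x (frontier E) ^ (-s)) := by
    intro x hx
    have hd : 0 < infDist x (frontier E) :=
      (hfr_closed.notMem_iff_infDist_pos hfr).1 hx.2
    refine le_trans (lintegral_mono_set ?_) (kernel_tail n hs0 x hd)
    intro y hy
    exact infDist_frontier_le_dist hx.1.1 hy.1
  calc perL n s E Ω
      = ∫⁻ x in E ∩ Ω, ∫⁻ y in Eᶜ ∩ Ω, fracKer n s x y := rfl
    _ ≤ (∫⁻ x in (E ∩ Ω) \ frontier E, ∫⁻ y in Eᶜ ∩ Ω, fracKer n s x y)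
        + ∫⁻ x in frontier E ∩ Ω, ∫⁻ y in Eᶜ ∩ Ω, fracKer n s x y := by
        refine le_trans (lintegral_mono_set ?_) (lintegral_union_le _ _ _)
        intro x hx
        by_cases h : x ∈ frontier E
        · exact Or.inr ⟨h, hx.2⟩
        · exact Or.inl ⟨hx, h⟩
    _ = ∫⁻ x in (E ∩ Ω) \ frontier E, ∫⁻ y in Eᶜ ∩ Ω, fracKer n s x y := by
        rw [setLIntegral_measure_zero _ _ hnull, add_zero]
    _ ≤ ∫⁻ x in (E ∩ Ω) \ frontier E,
          Cker n s * ENNReal.ofReal (infDist x (frontier E) ^ (-s)) :=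
        setLIntegral_mono' hset hpt
    _ ≤ ∫⁻ x in {x ∈ Ω | 0 < infDist x (frontier E)},
          Cker n s * ENNReal.ofReal (infDist x (frontier E) ^ (-s)) := by
        refine lintegral_mono_set ?_
        intro x hx
        exact ⟨hx.1.2, (hfr_closed.notMem_iff_infDist_pos hfr).1 hx.2⟩
    _ = Cker n s * ∫⁻ x in {x ∈ Ω | 0 < infDist x (frontier E)},
          ENNReal.ofReal (infDist x (frontier E) ^ (-s)) :=
        lintegral_const_mul' _ _ (Cker_ne_top n hs0)
    _ < ⊤ := ENNReal.mul_lt_top (Cker_ne_top n hs0).lt_top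
        (distInt_lt_top n (frontier E) Ω hΩo hΩb hs0 hsr hMt hρ₀pos hbd)
end

section
/- Let E ⊆ ℝⁿ be a bounded measurable set with ∂⁻E ≠ ∅, and suppose the upper Minkowski dimension d := Dim̄_M(∂⁻E, ℝⁿ) satisfies d ∈ [n−1, n). Then P_s(E) < ∞ for every s ∈ (0, n−d). -/
open MeasureTheory Metric Set Filter Bornology
open scoped ENNReal Topology

section Aux

open Metric MeasureTheory

variable {n : ℕ}

/-- The set of points near which `A` is Lebesgue-null is open. -/
lemma isOpen_nullNear (n : ℕ) (A : Set (EuclideanSpace ℝ (Fin n))) :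
    IsOpen {x : EuclideanSpace ℝ (Fin n) | ∃ r > 0, volume (A ∩ ball x r) = 0} := by
  rw [Metric.isOpen_iff]
  rintro x ⟨r, hr, hx⟩
  refine ⟨r / 2, by positivity, fun y hy => ⟨r / 2, by positivity, ?_⟩⟩
  refine measure_mono_null ?_ hx
  rintro z ⟨hzA, hzb⟩
  have h1 : dist z y < r / 2 := hzb
  have h2 : dist y x < r / 2 := hy
  refine ⟨hzA, ?_⟩
  show dist z x < r
  calc dist z x ≤ dist z y + dist y x := dist_triangle _ _ _
  _ < r := by linarith

lemma not_mem_mtb_iff {E : Set (EuclideanSpace ℝ (Fin n))} (hE : MeasurableSet E)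
    {x : EuclideanSpace ℝ (Fin n)} :
    x ∉ mtb n E ↔ (∃ r > 0, volume (E ∩ ball x r) = 0) ∨
      (∃ r > 0, volume (Eᶜ ∩ ball x r) = 0) := by
  have hsplit : ∀ r : ℝ, volume (E ∩ ball x r) + volume (Eᶜ ∩ ball x r)
      = volume (ball x r) := by
    intro r
    have := measure_inter_add_diff (μ := volume) (ball x r) hE
    simpa [Set.inter_comm, Set.diff_eq, Set.inter_comm (ball x r)] using this
  constructor
  · intro hx
    simp only [mtb, Set.mem_setOf_eq, not_forall] at hx
    obtain ⟨r, hr, h⟩ := hx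
    rcases not_and_or.1 h with h | h
    · exact Or.inl ⟨r, hr, by simpa [pos_iff_ne_zero] using h⟩
    · refine Or.inr ⟨r, hr, ?_⟩
      have hle : volume (ball x r) ≤ volume (E ∩ ball x r) := not_lt.1 h
      have hne : volume (E ∩ ball x r) ≠ ⊤ :=
        ((measure_mono Set.inter_subset_right).trans_lt measure_ball_lt_top).ne
      have h2 : volume (E ∩ ball x r) + volume (Eᶜ ∩ ball x r)
          ≤ volume (E ∩ ball x r) + 0 := by
        rw [add_zero, hsplit r]
        exact hle
      simpa using (ENNReal.add_le_add_iff_left hne).1 h2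
  · rintro (⟨r, hr, h⟩ | ⟨r, hr, h⟩) hx
    · exact absurd h (hx r hr).1.ne'
    · have := (hx r hr).2
      rw [← hsplit r, h, add_zero] at this
      exact lt_irrefl _ this

lemma isClosed_mtb {E : Set (EuclideanSpace ℝ (Fin n))} (hE : MeasurableSet E) :
    IsClosed (mtb n E) := by
  rw [← isOpen_compl_iff]
  have : (mtb n E)ᶜ = {x : EuclideanSpace ℝ (Fin n) | ∃ r > 0, volume (E ∩ ball x r) = 0}
      ∪ {x | ∃ r > 0, volume (Eᶜ ∩ ball x r) = 0} := by
    ext x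
    simp only [Set.mem_compl_iff, Set.mem_union, Set.mem_setOf_eq]
    exact not_mem_mtb_iff hE
  rw [this]
  exact (isOpen_nullNear n E).union (isOpen_nullNear n Eᶜ)

/-- If `x` is a point near which `Eᶜ` is null and the ball `ball x ρ` misses the
measure-theoretic boundary, then `Eᶜ` is null on all of `ball x ρ`. -/
lemma compl_null_on_ball {E : Set (EuclideanSpace ℝ (Fin n))} (hE : MeasurableSet E)
    {x : EuclideanSpace ℝ (Fin n)} {ρ : ℝ}
    (hx : ∃ r > 0, volume (Eᶜ ∩ ball x r) = 0)
    (hρ : ∀ y ∈ ball x ρ, y ∉ mtb n E) :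
    volume (Eᶜ ∩ ball x ρ) = 0 := by
  rcases le_or_gt ρ 0 with h | h
  · simp [ball_eq_empty.2 h]
  set U := {x : EuclideanSpace ℝ (Fin n) | ∃ r > 0, volume (Eᶜ ∩ ball x r) = 0} with hU
  set V := {x : EuclideanSpace ℝ (Fin n) | ∃ r > 0, volume (E ∩ ball x r) = 0} with hV
  have hdisj : Disjoint U V := by
    rw [Set.disjoint_left]
    rintro y ⟨r1, hr1, h1⟩ ⟨r2, hr2, h2⟩
    have hb : volume (ball y (min r1 r2)) = 0 := by
      have hsub : ball y (min r1 r2) ⊆ (Eᶜ ∩ ball y r1) ∪ (E ∩ ball y r2) := by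
        intro z hz
        by_cases hzE : z ∈ E
        · exact Or.inr ⟨hzE, ball_subset_ball (min_le_right _ _) hz⟩
        · exact Or.inl ⟨hzE, ball_subset_ball (min_le_left _ _) hz⟩
      exact measure_mono_null hsub (measure_union_null h1 h2)
    exact absurd hb (measure_ball_pos volume y (lt_min hr1 hr2)).ne'
  have hsub : ball x ρ ⊆ U := by
    refine (convex_ball x ρ).isPreconnected.subset_left_of_subset_union
      (isOpen_nullNear n Eᶜ) (isOpen_nullNear n E) hdisj ?_ ⟨x, mem_ball_self h, hx⟩
    intro y hy
    rcases (not_mem_mtb_iff hE).1 (hρ y hy) with h' | h'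
    · exact Or.inr h'
    · exact Or.inl h'
  refine measure_null_of_locally_null _ fun y hy => ?_
  obtain ⟨r, hr, hnull⟩ := hsub hy.2
  refine ⟨(Eᶜ ∩ ball x ρ) ∩ ball y r,
    inter_mem_nhdsWithin _ (ball_mem_nhds y hr), measure_mono_null ?_ hnull⟩
  rintro z ⟨⟨hz1, _⟩, hz2⟩
  exact ⟨hz1, hz2⟩

/-- Tail estimate: `∫_{|y-x| ≥ δ} |x-y|^{-(n+s)} dy ≤ C δ^{-s}`. -/
lemma tail_bound (hn : 1 ≤ n) {s δ : ℝ} (hs : 0 < s) (hδ : 0 < δ)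
    (x : EuclideanSpace ℝ (Fin n)) :
    ∫⁻ y in (ball x δ)ᶜ, fracKer n s x y ≤
      (volume (ball (0 : EuclideanSpace ℝ (Fin n)) 1) * ENNReal.ofReal ((2 : ℝ) ^ n) *
        (1 - ENNReal.ofReal ((2 : ℝ) ^ (-s)))⁻¹) * ENNReal.ofReal (δ ^ (-s)) := by
  set ω := volume (ball (0 : EuclideanSpace ℝ (Fin n)) 1) with hω
  have hcover : (ball x δ)ᶜ ⊆
      ⋃ j : ℕ, (ball x (δ * 2 ^ (j + 1)) \ ball x (δ * 2 ^ j)) := by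
    intro y hy
    have hyd : δ ≤ dist x y := by
      simpa [mem_ball, dist_comm, not_lt] using hy
    have h1 : 1 ≤ dist x y / δ := (one_le_div hδ).2 hyd
    obtain ⟨j, hj1, hj2⟩ := exists_nat_pow_near h1 one_lt_two
    have hj1' : δ * 2 ^ j ≤ dist x y := by
      rw [mul_comm]
      exact (le_div_iff₀ hδ).1 hj1
    have hj2' : dist x y < δ * 2 ^ (j + 1) := by
      rw [mul_comm]
      exact (div_lt_iff₀ hδ).1 hj2
    refine Set.mem_iUnion.2 ⟨j, ?_, ?_⟩
    · show dist y x < δ * 2 ^ (j + 1)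
      rwa [dist_comm]
    · simp only [mem_ball, not_lt, dist_comm]
      exact hj1'
  have hterm : ∀ j : ℕ,
      (∫⁻ y in ball x (δ * 2 ^ (j + 1)) \ ball x (δ * 2 ^ j), fracKer n s x y) ≤
        ENNReal.ofReal (δ ^ (-s)) * ENNReal.ofReal ((2 : ℝ) ^ n) *
          (ENNReal.ofReal ((2 : ℝ) ^ (-s))) ^ j * ω := by
    intro j
    haveI : Nonempty (Fin n) := Fin.pos_iff_nonempty.1 hn
    have e1 : (0 : ℝ) < δ * 2 ^ j := by positivity
    have e2 : (0 : ℝ) < δ * 2 ^ (j + 1) := by positivity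
    have hkey : (δ * 2 ^ j) ^ (-((n : ℝ) + s)) * (δ * 2 ^ (j + 1)) ^ (n : ℕ)
        = δ ^ (-s) * ((2 : ℝ) ^ (n : ℕ) * ((2 : ℝ) ^ (-s)) ^ j) := by
      have p1 : (0 : ℝ) < (δ * 2 ^ j) ^ (-((n : ℝ) + s)) := Real.rpow_pos_of_pos e1 _
      have p2 : (0 : ℝ) < δ ^ (-s) := Real.rpow_pos_of_pos hδ _
      have p3 : (0 : ℝ) < (2 : ℝ) ^ (-s) := Real.rpow_pos_of_pos two_pos _
      apply Real.log_injOn_pos (Set.mem_Ioi.2 (by positivity)) (Set.mem_Ioi.2 (by positivity))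
      rw [Real.log_mul p1.ne' (by positivity), Real.log_rpow e1, Real.log_pow,
        Real.log_mul hδ.ne' (by positivity), Real.log_mul hδ.ne' (by positivity),
        Real.log_pow, Real.log_pow,
        Real.log_mul p2.ne' (by positivity), Real.log_mul (by positivity) (by positivity),
        Real.log_rpow hδ, Real.log_pow, Real.log_pow, Real.log_rpow two_pos]
      push_cast
      ring
    have hbound : ∀ y ∈ ball x (δ * 2 ^ (j + 1)) \ ball x (δ * 2 ^ j),
        fracKer n s x y ≤ ENNReal.ofReal ((δ * 2 ^ j) ^ (-((n : ℝ) + s))) := by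
      rintro y ⟨_, hy2⟩
      have hdy : δ * 2 ^ j ≤ dist x y := by
        simpa [mem_ball, not_lt, dist_comm] using hy2
      have hnorm : ‖x - y‖ = dist x y := by rw [dist_eq_norm]
      unfold fracKer
      apply ENNReal.ofReal_le_ofReal
      rw [hnorm]
      refine Real.rpow_le_rpow_of_nonpos e1 hdy ?_
      have : (0 : ℝ) ≤ (n : ℝ) + s := by positivity
      linarith
    calc (∫⁻ y in ball x (δ * 2 ^ (j + 1)) \ ball x (δ * 2 ^ j), fracKer n s x y)
        ≤ ∫⁻ _ in ball x (δ * 2 ^ (j + 1)) \ ball x (δ * 2 ^ j),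
            ENNReal.ofReal ((δ * 2 ^ j) ^ (-((n : ℝ) + s))) :=
          setLIntegral_mono' (measurableSet_ball.diff measurableSet_ball) hbound
      _ = ENNReal.ofReal ((δ * 2 ^ j) ^ (-((n : ℝ) + s))) *
            volume (ball x (δ * 2 ^ (j + 1)) \ ball x (δ * 2 ^ j)) :=
          setLIntegral_const _ _
      _ ≤ ENNReal.ofReal ((δ * 2 ^ j) ^ (-((n : ℝ) + s))) *
            volume (ball x (δ * 2 ^ (j + 1))) :=
          mul_le_mul_right (measure_mono Set.diff_subset) _
      _ = ENNReal.ofReal ((δ * 2 ^ j) ^ (-((n : ℝ) + s))) *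
            (ENNReal.ofReal ((δ * 2 ^ (j + 1)) ^ (n : ℕ)) * ω) := by
          rw [Measure.addHaar_ball (μ := (volume : Measure (EuclideanSpace ℝ (Fin n)))) x e2.le,
            finrank_euclideanSpace_fin]
      _ = ENNReal.ofReal ((δ * 2 ^ j) ^ (-((n : ℝ) + s)) * (δ * 2 ^ (j + 1)) ^ (n : ℕ)) * ω := by
          rw [ENNReal.ofReal_mul (Real.rpow_nonneg e1.le _)]
          ring
      _ = ENNReal.ofReal (δ ^ (-s)) * ENNReal.ofReal ((2 : ℝ) ^ n) *
            (ENNReal.ofReal ((2 : ℝ) ^ (-s))) ^ j * ω := by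
          rw [hkey, ENNReal.ofReal_mul (by positivity), ENNReal.ofReal_mul (by positivity),
            ENNReal.ofReal_pow (by positivity), ENNReal.ofReal_pow (by positivity)]
          ring
  calc ∫⁻ y in (ball x δ)ᶜ, fracKer n s x y
      ≤ ∫⁻ y in ⋃ j : ℕ, (ball x (δ * 2 ^ (j + 1)) \ ball x (δ * 2 ^ j)),
          fracKer n s x y := lintegral_mono_set hcover
    _ ≤ ∑' j : ℕ, ∫⁻ y in ball x (δ * 2 ^ (j + 1)) \ ball x (δ * 2 ^ j),
          fracKer n s x y := lintegral_iUnion_le _ _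
    _ ≤ ∑' j : ℕ, (ENNReal.ofReal (δ ^ (-s)) * ENNReal.ofReal ((2 : ℝ) ^ n) *
          (ENNReal.ofReal ((2 : ℝ) ^ (-s))) ^ j * ω) := ENNReal.tsum_le_tsum hterm
    _ = (ENNReal.ofReal (δ ^ (-s)) * ENNReal.ofReal ((2 : ℝ) ^ n) * ω) *
          ∑' j : ℕ, (ENNReal.ofReal ((2 : ℝ) ^ (-s))) ^ j := by
        rw [← ENNReal.tsum_mul_left]
        congr 1
        funext j
        ring
    _ = (ENNReal.ofReal (δ ^ (-s)) * ENNReal.ofReal ((2 : ℝ) ^ n) * ω) *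
          (1 - ENNReal.ofReal ((2 : ℝ) ^ (-s)))⁻¹ := by
        rw [ENNReal.tsum_geometric]
    _ = (ω * ENNReal.ofReal ((2 : ℝ) ^ n) * (1 - ENNReal.ofReal ((2 : ℝ) ^ (-s)))⁻¹) *
          ENNReal.ofReal (δ ^ (-s)) := by ring

end Aux

/-- If `E ⊆ ℝⁿ` is bounded and measurable, `∂⁻E ≠ ∅`, and the upper
Minkowski dimension `d` of `∂⁻E` lies in `[n-1, n)`, then `P_s(E) < ∞` for all
`s ∈ (0, n-d)`. -/
theorem perG_lt_top_of_upMinkDim (n : ℕ) (hn : 1 ≤ n) (E : Set (EuclideanSpace ℝ (Fin n)))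
    (hE : MeasurableSet E) (hEb : IsBounded E) (hne : (mtb n E).Nonempty)
    (hd : upMinkDim n (mtb n E) Set.univ ∈ Set.Ico ((n : ℝ) - 1) n) :
    ∀ s ∈ Set.Ioo (0 : ℝ) ((n : ℝ) - upMinkDim n (mtb n E) Set.univ),
      perG n s E < ⊤ := by
  rintro s ⟨hs0, hsd⟩
  have hΓclosed : IsClosed (mtb n E) := isClosed_mtb hE
  set Γ := mtb n E with hΓdef
  set d := upMinkDim n Γ Set.univ with hdd
  obtain ⟨hd1, hd2⟩ := hd
  -- choose intermediate exponent r
  set r : ℝ := d + ((n : ℝ) - d - s) / 2 with hrdef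
  have hβ : 0 < (n : ℝ) - r - s := by rw [hrdef]; linarith
  have hdr : d < r := by rw [hrdef]; linarith
  have hrn : r < n := by rw [hrdef]; linarith
  have hr0 : 0 ≤ r := by
    have h1 : (1 : ℝ) ≤ n := by exact_mod_cast hn
    linarith
  have hcont : upMinkContent n r Γ Set.univ ≠ ⊤ := by
    intro hcon
    have hble : BddAbove {r' : ℝ | r' ∈ Set.Icc (0 : ℝ) n ∧ upMinkContent n r' Γ Set.univ = ⊤} :=
      ⟨n, fun y hy => hy.1.2⟩
    have : r ≤ d := le_csSup hble ⟨⟨hr0, hrn.le⟩, hcon⟩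
    linarith
  set L := upMinkContent n r Γ Set.univ with hLdef
  have hLne : L + 1 ≠ ⊤ := by
    rw [ENNReal.add_ne_top]
    exact ⟨hcont, ENNReal.one_ne_top⟩
  have hev : ∀ᶠ ρ in 𝓝[>] (0 : ℝ),
      volume (clNbd n ρ Γ Set.univ) / ENNReal.ofReal (ρ ^ ((n : ℝ) - r)) < L + 1 :=
    Filter.eventually_lt_of_limsup_lt (ENNReal.lt_add_right hcont one_ne_zero)
  rw [eventually_nhdsWithin_iff, Metric.eventually_nhds_iff] at hev
  obtain ⟨ε, hε, hevb⟩ := hev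
  have hNbd : ∀ ρ : ℝ, 0 < ρ → ρ < ε →
      volume (clNbd n ρ Γ Set.univ) ≤ (L + 1) * ENNReal.ofReal (ρ ^ ((n : ℝ) - r)) := by
    intro ρ h1 h2
    have hd0 : ENNReal.ofReal (ρ ^ ((n : ℝ) - r)) ≠ 0 := by
      simp only [ne_eq, ENNReal.ofReal_eq_zero, not_le]
      positivity
    have hlt := hevb (by rw [Real.dist_eq, sub_zero, abs_of_pos h1]; exact h2)
      (Set.mem_Ioi.2 h1)
    exact ((ENNReal.div_lt_iff (Or.inl hd0) (Or.inl ENNReal.ofReal_ne_top)).1 hlt).le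
  -- the boundary is null
  have hΓnull : volume Γ = 0 := by
    have hct : Tendsto (fun ρ : ℝ => ρ ^ ((n : ℝ) - r)) (𝓝[>] 0) (𝓝 0) := by
      have h0 : ContinuousAt (fun ρ : ℝ => ρ ^ ((n : ℝ) - r)) 0 :=
        Real.continuousAt_rpow_const 0 _ (Or.inr (by linarith))
      have h1 : Tendsto (fun ρ : ℝ => ρ ^ ((n : ℝ) - r)) (𝓝[>] 0) (𝓝 ((0:ℝ) ^ ((n : ℝ) - r))) :=
        h0.tendsto.mono_left nhdsWithin_le_nhds
      rwa [Real.zero_rpow (by linarith : (n : ℝ) - r ≠ 0)] at h1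
    have htend : Tendsto (fun ρ : ℝ => (L + 1) * ENNReal.ofReal (ρ ^ ((n : ℝ) - r)))
        (𝓝[>] 0) (𝓝 0) := by
      have h2 : Tendsto (fun ρ : ℝ => ENNReal.ofReal (ρ ^ ((n : ℝ) - r))) (𝓝[>] 0)
          (𝓝 (ENNReal.ofReal 0)) := (ENNReal.continuous_ofReal.tendsto 0).comp hct
      have h3 := ENNReal.Tendsto.const_mul h2 (Or.inr hLne)
      simpa using h3
    refine le_antisymm ?_ (zero_le ..)
    refine ge_of_tendsto htend ?_
    filter_upwards [Ioo_mem_nhdsGT_of_mem ⟨le_refl (0 : ℝ), hε⟩] with ρ hρ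
    refine le_trans (measure_mono ?_) (hNbd ρ hρ.1 hρ.2)
    intro x hx
    exact ⟨Set.mem_univ x, by rw [Metric.infDist_zero_of_mem hx]; exact hρ.1.le⟩
  -- good set G
  set U := {x : EuclideanSpace ℝ (Fin n) | ∃ r' > (0 : ℝ), volume (Eᶜ ∩ ball x r') = 0}
    with hUdef
  set G := (E ∩ U) \ Γ with hGdef
  have hGm : MeasurableSet G :=
    (hE.inter (isOpen_nullNear n Eᶜ).measurableSet).diff hΓclosed.measurableSet
  have hEG : volume (E \ G) = 0 := by
    have hEV : volume (E ∩ {x : EuclideanSpace ℝ (Fin n) |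
        ∃ r' > (0 : ℝ), volume (E ∩ ball x r') = 0}) = 0 := by
      refine measure_null_of_locally_null _ fun y hy => ?_
      obtain ⟨r', hr', hnull⟩ := hy.2
      refine ⟨_ ∩ ball y r', inter_mem_nhdsWithin _ (ball_mem_nhds y hr'),
        measure_mono_null ?_ hnull⟩
      rintro z ⟨⟨hz1, _⟩, hz2⟩
      exact ⟨hz1, hz2⟩
    refine measure_mono_null ?_ (measure_union_null hEV hΓnull)
    rintro x ⟨hxE, hxG⟩
    by_cases hxΓ : x ∈ Γ
    · exact Or.inr hxΓ
    rcases (not_mem_mtb_iff hE).1 hxΓ with h | h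
    · exact Or.inl ⟨hxE, h⟩
    · exact absurd (⟨⟨hxE, h⟩, hxΓ⟩ : x ∈ G) hxG
  have hδpos : ∀ x ∈ G, 0 < Metric.infDist x Γ := fun x hx =>
    (hΓclosed.notMem_iff_infDist_pos hne).1 hx.2
  -- the constant of the tail bound
  set Ct := volume (ball (0 : EuclideanSpace ℝ (Fin n)) 1) * ENNReal.ofReal ((2 : ℝ) ^ n) *
      (1 - ENNReal.ofReal ((2 : ℝ) ^ (-s)))⁻¹ with hCt
  have hCtne : Ct ≠ ⊤ := by
    have h1 : ENNReal.ofReal ((2 : ℝ) ^ (-s)) < 1 := by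
      rw [ENNReal.ofReal_lt_one]
      exact Real.rpow_lt_one_of_one_lt_of_neg one_lt_two (by linarith)
    have h2 : (1 - ENNReal.ofReal ((2 : ℝ) ^ (-s)))⁻¹ < ⊤ := by
      rw [ENNReal.inv_lt_top]
      exact tsub_pos_of_lt h1
    exact (ENNReal.mul_lt_top
      (ENNReal.mul_lt_top measure_ball_lt_top ENNReal.ofReal_lt_top) h2).ne
  -- pointwise inner bound on G
  have hinner : ∀ x ∈ G, (∫⁻ y in Eᶜ, fracKer n s x y) ≤
      Ct * ENNReal.ofReal ((Metric.infDist x Γ) ^ (-s)) := by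
    intro x hx
    set δx := Metric.infDist x Γ with hδx
    have hδ0 : 0 < δx := hδpos x hx
    have hball : ∀ y ∈ ball x δx, y ∉ Γ := by
      intro y hy hyΓ
      have h1 : Metric.infDist x Γ ≤ dist x y := Metric.infDist_le_dist_of_mem hyΓ
      rw [dist_comm] at h1
      exact absurd h1 (not_le.2 hy)
    have hnull2 : volume (Eᶜ ∩ ball x δx) = 0 := compl_null_on_ball hE hx.1.2 hball
    have hsplit : Eᶜ ⊆ (ball x δx)ᶜ ∪ (Eᶜ ∩ ball x δx) := by
      intro y hy
      by_cases h : y ∈ ball x δx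
      · exact Or.inr ⟨hy, h⟩
      · exact Or.inl h
    calc (∫⁻ y in Eᶜ, fracKer n s x y)
        ≤ ∫⁻ y in (ball x δx)ᶜ ∪ (Eᶜ ∩ ball x δx), fracKer n s x y :=
          lintegral_mono_set hsplit
      _ ≤ (∫⁻ y in (ball x δx)ᶜ, fracKer n s x y) +
            ∫⁻ y in Eᶜ ∩ ball x δx, fracKer n s x y := lintegral_union_le _ _ _
      _ = ∫⁻ y in (ball x δx)ᶜ, fracKer n s x y := by
          rw [setLIntegral_measure_zero _ _ hnull2, add_zero]
      _ ≤ Ct * ENNReal.ofReal (δx ^ (-s)) := tail_bound hn hs0 hδ0 x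
  -- dyadic decomposition
  obtain ⟨k0, hk0⟩ := exists_pow_lt_of_lt_one (lt_min hε one_pos) (by norm_num : (2⁻¹ : ℝ) < 1)
  set ρf : ℕ → ℝ := fun k => (2⁻¹ : ℝ) ^ (k0 + k) with hρf
  have hρfpos : ∀ k, 0 < ρf k := fun k => by positivity
  have hρfk0 : ∀ k, ρf k ≤ (2⁻¹ : ℝ) ^ k0 := fun k =>
    pow_le_pow_of_le_one (by norm_num) (by norm_num) (Nat.le_add_right _ _)
  have hρflt : ∀ k, ρf k < ε := fun k =>
    lt_of_le_of_lt (hρfk0 k) (lt_of_lt_of_le hk0 (min_le_left _ _))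
  set Gfar := G ∩ {x : EuclideanSpace ℝ (Fin n) | (2⁻¹ : ℝ) ^ k0 < Metric.infDist x Γ}
    with hGfar
  set Gk : ℕ → Set (EuclideanSpace ℝ (Fin n)) := fun k =>
    G ∩ (fun x => Metric.infDist x Γ) ⁻¹' Set.Ioc (ρf (k + 1)) (ρf k) with hGks
  have hGcover : G ⊆ Gfar ∪ ⋃ k, Gk k := by
    intro x hx
    rcases lt_or_ge ((2⁻¹ : ℝ) ^ k0) (Metric.infDist x Γ) with h | h
    · exact Or.inl ⟨hx, h⟩
    · set δx := Metric.infDist x Γ with hδxd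
      have hδ0 : 0 < δx := hδpos x hx
      have hδ1 : δx ≤ 1 := le_trans h (pow_le_one₀ (by norm_num) (by norm_num))
      have hinv1 : 1 ≤ δx⁻¹ := (one_le_inv₀ hδ0).2 hδ1
      obtain ⟨m, hm1, hm2⟩ := exists_nat_pow_near hinv1 one_lt_two
      have hub : δx ≤ (2⁻¹ : ℝ) ^ m := by
        rw [inv_pow]
        have := inv_anti₀ (by positivity : (0 : ℝ) < 2 ^ m) hm1
        rwa [inv_inv] at this
      have hlb : (2⁻¹ : ℝ) ^ (m + 1) < δx := by
        rw [inv_pow]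
        have := inv_strictAnti₀ (by positivity : (0 : ℝ) < δx⁻¹) hm2
        rwa [inv_inv] at this
      have hk0m : k0 ≤ m := by
        by_contra hcon
        push_neg at hcon
        have h1 : (2⁻¹ : ℝ) ^ (m + 1) < (2⁻¹ : ℝ) ^ k0 :=
          lt_of_lt_of_le hlb h
        have h2 : k0 < m + 1 :=
          (pow_lt_pow_iff_right_of_lt_one₀ (by norm_num) (by norm_num)).1 h1
        omega
      refine Or.inr (Set.mem_iUnion.2 ⟨m - k0, hx, ?_, ?_⟩)
      · show ρf (m - k0 + 1) < δx
        have : k0 + (m - k0 + 1) = m + 1 := by omega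
        rw [hρf]
        simpa [this] using hlb
      · show δx ≤ ρf (m - k0)
        have : k0 + (m - k0) = m := by omega
        rw [hρf]
        simpa [this] using hub
  -- measurability
  have hδmeas : Measurable fun x : EuclideanSpace ℝ (Fin n) => Metric.infDist x Γ :=
    (continuous_infDist_pt Γ).measurable
  have hGfarm : MeasurableSet Gfar := hGm.inter (hδmeas measurableSet_Ioi)
  have hGkm : ∀ k, MeasurableSet (Gk k) := fun k => hGm.inter (hδmeas measurableSet_Ioc)
  -- volume of E is finite
  have hvolE : volume E < ⊤ := by
    obtain ⟨R, hR⟩ := hEb.subset_closedBall 0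
    exact lt_of_le_of_lt (measure_mono hR) measure_closedBall_lt_top
  -- far piece
  have hfar : (∫⁻ x in Gfar, ENNReal.ofReal ((Metric.infDist x Γ) ^ (-s))) ≤
      ENNReal.ofReal (((2⁻¹ : ℝ) ^ k0) ^ (-s)) * volume E := by
    calc (∫⁻ x in Gfar, ENNReal.ofReal ((Metric.infDist x Γ) ^ (-s)))
        ≤ ∫⁻ _ in Gfar, ENNReal.ofReal (((2⁻¹ : ℝ) ^ k0) ^ (-s)) := by
          refine setLIntegral_mono' hGfarm fun x hx => ?_
          refine ENNReal.ofReal_le_ofReal ?_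
          exact Real.rpow_le_rpow_of_nonpos (by positivity) hx.2.le (by linarith)
      _ = ENNReal.ofReal (((2⁻¹ : ℝ) ^ k0) ^ (-s)) * volume Gfar := setLIntegral_const _ _
      _ ≤ ENNReal.ofReal (((2⁻¹ : ℝ) ^ k0) ^ (-s)) * volume E := by
          refine mul_le_mul_right (measure_mono ?_) _
          rintro x ⟨⟨⟨hxE, _⟩, _⟩, _⟩
          exact hxE
  -- dyadic pieces
  have hconv : ∀ M : ℕ, ((2⁻¹ : ℝ)) ^ M = (2 : ℝ) ^ (-(M : ℝ)) := by
    intro M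
    rw [inv_pow, ← Real.rpow_natCast 2 M, ← Real.rpow_neg (by norm_num)]
  have hkey2 : ∀ k : ℕ, (ρf (k + 1)) ^ (-s) * (ρf k) ^ ((n : ℝ) - r) ≤
      (2 : ℝ) ^ s * ((2 : ℝ) ^ (-((n : ℝ) - r - s))) ^ k := by
    intro k
    rw [hρf]
    simp only []
    have e1 : k0 + (k + 1) = (k0 + k) + 1 := by omega
    rw [e1, hconv ((k0 + k) + 1), hconv (k0 + k),
      ← Real.rpow_natCast ((2 : ℝ) ^ (-((n : ℝ) - r - s))) k,
      ← Real.rpow_mul (by norm_num : (0 : ℝ) ≤ 2),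
      ← Real.rpow_mul (by norm_num : (0 : ℝ) ≤ 2),
      ← Real.rpow_mul (by norm_num : (0 : ℝ) ≤ 2),
      ← Real.rpow_add two_pos, ← Real.rpow_add two_pos]
    refine Real.rpow_le_rpow_of_exponent_le one_le_two ?_
    push_cast
    nlinarith [mul_nonneg (Nat.cast_nonneg k0 : (0 : ℝ) ≤ k0) hβ.le]
  have hdyad : ∀ k : ℕ, (∫⁻ x in Gk k, ENNReal.ofReal ((Metric.infDist x Γ) ^ (-s))) ≤
      (L + 1) * ENNReal.ofReal ((2 : ℝ) ^ s) *
        (ENNReal.ofReal ((2 : ℝ) ^ (-((n : ℝ) - r - s)))) ^ k := by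
    intro k
    calc (∫⁻ x in Gk k, ENNReal.ofReal ((Metric.infDist x Γ) ^ (-s)))
        ≤ ∫⁻ _ in Gk k, ENNReal.ofReal ((ρf (k + 1)) ^ (-s)) := by
          refine setLIntegral_mono' (hGkm k) fun x hx => ?_
          refine ENNReal.ofReal_le_ofReal ?_
          exact Real.rpow_le_rpow_of_nonpos (hρfpos (k + 1)) hx.2.1.le (by linarith)
      _ = ENNReal.ofReal ((ρf (k + 1)) ^ (-s)) * volume (Gk k) := setLIntegral_const _ _
      _ ≤ ENNReal.ofReal ((ρf (k + 1)) ^ (-s)) *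
            ((L + 1) * ENNReal.ofReal ((ρf k) ^ ((n : ℝ) - r))) := by
          refine mul_le_mul_right ?_ _
          refine le_trans (measure_mono ?_) (hNbd (ρf k) (hρfpos k) (hρflt k))
          rintro x ⟨hxG, hx2⟩
          exact ⟨Set.mem_univ x, hx2.2⟩
      _ = (L + 1) * ENNReal.ofReal ((ρf (k + 1)) ^ (-s) * (ρf k) ^ ((n : ℝ) - r)) := by
          rw [ENNReal.ofReal_mul (Real.rpow_nonneg (hρfpos (k + 1)).le _)]
          ring
      _ ≤ (L + 1) * ENNReal.ofReal ((2 : ℝ) ^ s * ((2 : ℝ) ^ (-((n : ℝ) - r - s))) ^ k) :=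
          mul_le_mul_right (ENNReal.ofReal_le_ofReal (hkey2 k)) _
      _ = (L + 1) * ENNReal.ofReal ((2 : ℝ) ^ s) *
            (ENNReal.ofReal ((2 : ℝ) ^ (-((n : ℝ) - r - s)))) ^ k := by
          rw [ENNReal.ofReal_mul (by positivity), ENNReal.ofReal_pow (by positivity)]
          ring
  -- assemble
  have hq1 : ENNReal.ofReal ((2 : ℝ) ^ (-((n : ℝ) - r - s))) < 1 := by
    rw [ENNReal.ofReal_lt_one]
    exact Real.rpow_lt_one_of_one_lt_of_neg one_lt_two (by linarith)
  have hsum : (∑' k : ℕ, (L + 1) * ENNReal.ofReal ((2 : ℝ) ^ s) *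
      (ENNReal.ofReal ((2 : ℝ) ^ (-((n : ℝ) - r - s)))) ^ k) ≠ ⊤ := by
    rw [ENNReal.tsum_mul_left, ENNReal.tsum_geometric]
    refine (ENNReal.mul_lt_top
      (ENNReal.mul_lt_top hLne.lt_top ENNReal.ofReal_lt_top) ?_).ne
    rw [ENNReal.inv_lt_top]
    exact tsub_pos_of_lt hq1
  have hGbound : (∫⁻ x in G, ENNReal.ofReal ((Metric.infDist x Γ) ^ (-s))) ≠ ⊤ := by
    have hle : (∫⁻ x in G, ENNReal.ofReal ((Metric.infDist x Γ) ^ (-s))) ≤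
        ENNReal.ofReal (((2⁻¹ : ℝ) ^ k0) ^ (-s)) * volume E +
          ∑' k : ℕ, (L + 1) * ENNReal.ofReal ((2 : ℝ) ^ s) *
            (ENNReal.ofReal ((2 : ℝ) ^ (-((n : ℝ) - r - s)))) ^ k := by
      calc (∫⁻ x in G, ENNReal.ofReal ((Metric.infDist x Γ) ^ (-s)))
          ≤ ∫⁻ x in Gfar ∪ ⋃ k, Gk k, ENNReal.ofReal ((Metric.infDist x Γ) ^ (-s)) :=
            lintegral_mono_set hGcover
        _ ≤ (∫⁻ x in Gfar, ENNReal.ofReal ((Metric.infDist x Γ) ^ (-s))) +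
              ∫⁻ x in ⋃ k, Gk k, ENNReal.ofReal ((Metric.infDist x Γ) ^ (-s)) :=
            lintegral_union_le _ _ _
        _ ≤ (∫⁻ x in Gfar, ENNReal.ofReal ((Metric.infDist x Γ) ^ (-s))) +
              ∑' k : ℕ, ∫⁻ x in Gk k, ENNReal.ofReal ((Metric.infDist x Γ) ^ (-s)) :=
            add_le_add_right (lintegral_iUnion_le _ _) _
        _ ≤ _ := add_le_add hfar (ENNReal.tsum_le_tsum hdyad)
    refine ne_top_of_le_ne_top ?_ hle
    rw [ENNReal.add_ne_top]
    exact ⟨(ENNReal.mul_lt_top ENNReal.ofReal_lt_top hvolE).ne, hsum⟩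
  -- final assembly
  have hfinal : perG n s E ≤ Ct * ∫⁻ x in G, ENNReal.ofReal ((Metric.infDist x Γ) ^ (-s)) := by
    have hEsub : E ⊆ G ∪ (E \ G) := by
      intro x hx
      by_cases h : x ∈ G
      · exact Or.inl h
      · exact Or.inr ⟨hx, h⟩
    calc perG n s E = ∫⁻ x in E, ∫⁻ y in Eᶜ, fracKer n s x y := rfl
      _ ≤ ∫⁻ x in G ∪ (E \ G), ∫⁻ y in Eᶜ, fracKer n s x y := lintegral_mono_set hEsub
      _ ≤ (∫⁻ x in G, ∫⁻ y in Eᶜ, fracKer n s x y) +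
            ∫⁻ x in E \ G, ∫⁻ y in Eᶜ, fracKer n s x y := lintegral_union_le _ _ _
      _ = ∫⁻ x in G, ∫⁻ y in Eᶜ, fracKer n s x y := by
          rw [setLIntegral_measure_zero _ _ hEG, add_zero]
      _ ≤ ∫⁻ x in G, Ct * ENNReal.ofReal ((Metric.infDist x Γ) ^ (-s)) :=
          setLIntegral_mono' hGm hinner
      _ = Ct * ∫⁻ x in G, ENNReal.ofReal ((Metric.infDist x Γ) ^ (-s)) :=
          lintegral_const_mul' _ _ hCtne
  exact lt_of_le_of_lt hfinal
    (ENNReal.mul_lt_top hCtne.lt_top hGbound.lt_top)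
end

section
/- Let n ≥ 1, λ > 1, let a, b be positive integers, and let T_0 ⊆ ℝⁿ be a bounded measurable set. For each integer k ≥ 1 and each 1 ≤ i ≤ a b^{k−1}, let R_k^i be a linear isometry of ℝⁿ and x_k^i ∈ ℝⁿ, define F_k^i(x) := R_k^i(λ^{−k} x) + x_k^i, and set T := ⋃_{k≥1} ⋃_{i=1}^{a b^{k−1}} F_k^i(T_0). Assume |F_k^i(T_0) ∩ F_h^j(T_0)| = 0 whenever (k,i) ≠ (h,j). If s ∈ (0,1) satisfies s < n − log b / log λ and P_s(T_0) < ∞, then P_s(T) < ∞. -/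
open MeasureTheory Metric Set Filter Bornology
open scoped ENNReal Topology

section aux
variable {n : ℕ}

/-- The affine map as a homeomorphism. -/
noncomputable def affH (e : EuclideanSpace ℝ (Fin n) ≃ₗᵢ[ℝ] EuclideanSpace ℝ (Fin n))
    (r : ℝ) (hr : 0 < r) (c : EuclideanSpace ℝ (Fin n)) :
    EuclideanSpace ℝ (Fin n) ≃ₜ EuclideanSpace ℝ (Fin n) where
  toFun x := e (r • x) + c
  invFun y := r⁻¹ • e.symm (y - c)
  left_inv x := by
    simp [add_sub_cancel_right, smul_smul, inv_mul_cancel₀ hr.ne']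
  right_inv y := by
    simp [smul_smul, mul_inv_cancel₀ hr.ne']
  continuous_toFun := by
    exact ((e.continuous.comp (continuous_const_smul r)).add continuous_const)
  continuous_invFun := by
    exact ((e.symm.continuous.comp (continuous_id.sub continuous_const)).const_smul r⁻¹)

lemma map_affH (e : EuclideanSpace ℝ (Fin n) ≃ₗᵢ[ℝ] EuclideanSpace ℝ (Fin n))
    (r : ℝ) (hr : 0 < r) (c : EuclideanSpace ℝ (Fin n)) :
    Measure.map (affH e r hr c) volume = ENNReal.ofReal ((r ^ n)⁻¹) • volume := by
  have h1 : (affH e r hr c : EuclideanSpace ℝ (Fin n) → EuclideanSpace ℝ (Fin n))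
      = (fun y => y + c) ∘ (⇑e) ∘ (fun x => r • x) := rfl
  have hm1 : Measurable (fun y : EuclideanSpace ℝ (Fin n) => y + c) :=
    (continuous_id.add continuous_const).measurable
  have hm2 : Measurable (⇑e) := e.continuous.measurable
  have hm3 : Measurable (fun x : EuclideanSpace ℝ (Fin n) => r • x) :=
    (continuous_const_smul r).measurable
  rw [h1, ← Measure.map_map hm1 (hm2.comp hm3), ← Measure.map_map hm2 hm3]
  have hsm : Measure.map (fun x : EuclideanSpace ℝ (Fin n) => r • x) volume
      = ENNReal.ofReal (|(r ^ Module.finrank ℝ (EuclideanSpace ℝ (Fin n)))⁻¹|) • volume := by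
    simpa using Measure.map_addHaar_smul (volume : Measure (EuclideanSpace ℝ (Fin n))) hr.ne'
  rw [hsm, Measure.map_smul, e.measurePreserving.map_eq, Measure.map_smul,
    map_add_right_eq_self volume c, finrank_euclideanSpace_fin,
    abs_of_nonneg (by positivity)]

lemma lintegral_image_aux (e : EuclideanSpace ℝ (Fin n) ≃ₗᵢ[ℝ] EuclideanSpace ℝ (Fin n))
    (r : ℝ) (hr : 0 < r) (c : EuclideanSpace ℝ (Fin n))
    (A : Set (EuclideanSpace ℝ (Fin n))) (hA : MeasurableSet A)
    (g : EuclideanSpace ℝ (Fin n) → ℝ≥0∞) :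
    ∫⁻ y in (fun x => e (r • x) + c) '' A, g y
      = ENNReal.ofReal (r ^ n) * ∫⁻ x in A, g (e (r • x) + c) := by
  set G := affH e r hr c
  have hGfun : (fun x => e (r • x) + c) = ⇑G := rfl
  have hGemb : MeasurableEmbedding ⇑G := G.measurableEmbedding
  have himg : MeasurableSet (G '' A) := hGemb.measurableSet_image.2 hA
  have hrn : (0:ℝ) < r ^ n := by positivity
  rw [hGfun]
  calc ∫⁻ y in G '' A, g y ∂volume
      = ENNReal.ofReal (r ^ n) * ∫⁻ y in G '' A, g y ∂(ENNReal.ofReal ((r ^ n)⁻¹) • volume) := by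
        rw [Measure.restrict_smul, lintegral_smul_measure, smul_eq_mul, ← mul_assoc,
          ← ENNReal.ofReal_mul hrn.le, mul_inv_cancel₀ hrn.ne', ENNReal.ofReal_one, one_mul]
    _ = ENNReal.ofReal (r ^ n) * ∫⁻ y in G '' A, g y ∂(Measure.map G volume) := by
        rw [map_affH]
    _ = ENNReal.ofReal (r ^ n) * ∫⁻ x in ⇑G ⁻¹' (G '' A), g (G x) ∂volume := by
        rw [Measure.restrict_map hGemb.measurable himg, hGemb.lintegral_map]
    _ = ENNReal.ofReal (r ^ n) * ∫⁻ x in A, g (G x) ∂volume := by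
        rw [G.injective.preimage_image]
  
end aux

section aux2
variable {n : ℕ}

lemma fracKer_affine (e : EuclideanSpace ℝ (Fin n) ≃ₗᵢ[ℝ] EuclideanSpace ℝ (Fin n))
    (r : ℝ) (hr : 0 < r) (c : EuclideanSpace ℝ (Fin n)) (s : ℝ)
    (x y : EuclideanSpace ℝ (Fin n)) :
    fracKer n s (e (r • x) + c) (e (r • y) + c)
      = ENNReal.ofReal (r ^ (-((n : ℝ) + s))) * fracKer n s x y := by
  have hnorm : ‖(e (r • x) + c) - (e (r • y) + c)‖ = r * ‖x - y‖ := by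
    rw [add_sub_add_right_eq_sub, ← map_sub, e.norm_map, ← smul_sub, norm_smul,
      Real.norm_eq_abs, abs_of_pos hr]
  rw [fracKer, hnorm, Real.mul_rpow hr.le (norm_nonneg _), ENNReal.ofReal_mul (by positivity)]
  rfl

lemma perG_image (e : EuclideanSpace ℝ (Fin n) ≃ₗᵢ[ℝ] EuclideanSpace ℝ (Fin n))
    (r : ℝ) (hr : 0 < r) (c : EuclideanSpace ℝ (Fin n)) (s : ℝ)
    (E0 : Set (EuclideanSpace ℝ (Fin n))) (hE : MeasurableSet E0) :
    perG n s ((fun x => e (r • x) + c) '' E0)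
      = ENNReal.ofReal (r ^ n * (r ^ n * r ^ (-((n : ℝ) + s)))) * perG n s E0 := by
  have hbij : Function.Bijective (fun x => e (r • x) + c) :=
    (affH e r hr c).bijective
  have hcompl : ((fun x => e (r • x) + c) '' E0)ᶜ = (fun x => e (r • x) + c) '' E0ᶜ :=
    (Set.image_compl_eq hbij).symm
  rw [perG, interL, hcompl, lintegral_image_aux e r hr c E0 hE]
  have hinner : ∀ x : EuclideanSpace ℝ (Fin n),
      (∫⁻ y in (fun x => e (r • x) + c) '' E0ᶜ, fracKer n s (e (r • x) + c) y)
        = ENNReal.ofReal (r ^ n) * (ENNReal.ofReal (r ^ (-((n : ℝ) + s))) *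
            ∫⁻ y in E0ᶜ, fracKer n s x y) := by
    intro x
    rw [lintegral_image_aux e r hr c E0ᶜ hE.compl]
    congr 1
    rw [← lintegral_const_mul' _ _ ENNReal.ofReal_ne_top]
    exact lintegral_congr fun y => fracKer_affine e r hr c s x y
  simp only [hinner]
  rw [lintegral_const_mul' _ _ ENNReal.ofReal_ne_top,
    lintegral_const_mul' _ _ ENNReal.ofReal_ne_top, perG, interL,
    ENNReal.ofReal_mul (by positivity), ENNReal.ofReal_mul (by positivity)]
  ring

lemma const_aux (lam : ℝ) (hlam : 0 < lam) (k : ℕ) (s : ℝ) :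
    ((lam ^ k)⁻¹ ^ n * ((lam ^ k)⁻¹ ^ n * (lam ^ k)⁻¹ ^ (-((n : ℝ) + s))))
      = (lam ^ (-((n : ℝ) - s))) ^ k := by
  have ht0 : (0:ℝ) < (lam ^ k)⁻¹ := by positivity
  set t := (lam ^ k)⁻¹ with htdef
  have h1 : t ^ n = t ^ (n : ℝ) := (Real.rpow_natCast t n).symm
  rw [h1, ← Real.rpow_add ht0, ← Real.rpow_add ht0]
  have ht : t = lam ^ (-(k : ℝ)) := by
    rw [htdef, ← Real.rpow_natCast lam k, ← Real.rpow_neg hlam.le, Real.rpow_neg hlam.le]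
  rw [ht, ← Real.rpow_natCast (lam ^ (-((n:ℝ) - s))) k, ← Real.rpow_mul hlam.le,
    ← Real.rpow_mul hlam.le]
  ring_nf

end aux2

/-- Let `T` be the union of the sets `F_k^i(T₀)`, `k ≥ 1`,
`1 ≤ i ≤ a b^{k-1}`, where `F_k^i(x) = R_k^i(λ^{-k} x) + x_k^i` with `R_k^i` linear
isometries, and assume the pieces are pairwise a.e. disjoint. If `s ∈ (0,1)` with
`s < n - log b / log λ` and `P_s(T₀) < ∞`, then `P_s(T) < ∞`. -/
theorem perG_lt_top_selfSimilar (n : ℕ) (hn : 1 ≤ n) (lam : ℝ) (hlam : 1 < lam)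
    (a b : ℕ) (ha : 0 < a) (hb : 0 < b)
    (T0 : Set (EuclideanSpace ℝ (Fin n))) (hT0m : MeasurableSet T0) (hT0b : IsBounded T0)
    (R : ℕ → ℕ → (EuclideanSpace ℝ (Fin n) →ₗᵢ[ℝ] EuclideanSpace ℝ (Fin n)))
    (c : ℕ → ℕ → EuclideanSpace ℝ (Fin n))
    (F : ℕ → ℕ → EuclideanSpace ℝ (Fin n) → EuclideanSpace ℝ (Fin n))
    (hF : ∀ k i x, F k i x = R k i ((lam ^ k)⁻¹ • x) + c k i)
    (T : Set (EuclideanSpace ℝ (Fin n)))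
    (hT : T = ⋃ (k : ℕ) (_ : 1 ≤ k) (i : ℕ) (_ : 1 ≤ i) (_ : i ≤ a * b ^ (k - 1)),
        F k i '' T0)
    (hdisj : ∀ k h i j : ℕ, 1 ≤ k → 1 ≤ h → 1 ≤ i → i ≤ a * b ^ (k - 1) →
        1 ≤ j → j ≤ a * b ^ (h - 1) → (k, i) ≠ (h, j) →
        volume (F k i '' T0 ∩ F h j '' T0) = 0)
    (s : ℝ) (hs : s ∈ Set.Ioo (0 : ℝ) 1)
    (hsd : s < (n : ℝ) - Real.log b / Real.log lam)
    (hPT0 : perG n s T0 < ⊤) :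
    perG n s T < ⊤ := by
  classical
  obtain ⟨hs0, hs1⟩ := hs
  have hlam0 : (0:ℝ) < lam := lt_trans one_pos hlam
  set P := perG n s T0 with hPdef
  set ρ : ℝ := lam ^ (-((n : ℝ) - s)) with hρdef
  have hρ0 : (0:ℝ) < ρ := Real.rpow_pos_of_pos hlam0 _
  -- the geometric ratio
  have hbρ : (b : ℝ) * ρ < 1 := by
    have hlog : (0:ℝ) < Real.log lam := Real.log_pos hlam
    have h2 : Real.log b / Real.log lam < (n:ℝ) - s := by linarith
    have hns : Real.log b < ((n:ℝ) - s) * Real.log lam := by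
      have := (div_lt_iff₀ hlog).1 h2
      linarith
    have hb1 : (0:ℝ) < b := by exact_mod_cast hb
    have hblt : (b:ℝ) < lam ^ ((n:ℝ) - s) :=
      (Real.lt_rpow_iff_log_lt hb1 hlam0).2 hns
    rw [hρdef, Real.rpow_neg hlam0.le, ← div_eq_mul_inv,
      div_lt_one (Real.rpow_pos_of_pos hlam0 _)]
    exact hblt
  set q : ℝ≥0∞ := (b : ℝ≥0∞) * ENNReal.ofReal ρ with hqdef
  have hq1 : q < 1 := by
    rw [hqdef, ← ENNReal.ofReal_natCast b, ← ENNReal.ofReal_mul (by positivity)]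
    exact ENNReal.ofReal_lt_one.2 hbρ
  -- per-piece computation
  have hpiece : ∀ k i : ℕ, perG n s (F k i '' T0) = (ENNReal.ofReal ρ) ^ k * P := by
    intro k i
    have hFeq : F k i
        = fun x => ((R k i).toLinearIsometryEquiv rfl) ((lam ^ k)⁻¹ • x) + c k i := by
      funext x
      rw [hF k i x, LinearIsometry.coe_toLinearIsometryEquiv]
    have hr : (0:ℝ) < (lam ^ k)⁻¹ := inv_pos.2 (pow_pos hlam0 k)
    have hcalc := perG_image ((R k i).toLinearIsometryEquiv rfl) ((lam ^ k)⁻¹) hr (c k i) s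
      T0 hT0m
    rw [← hFeq, const_aux lam hlam0 k s, ENNReal.ofReal_pow hρ0.le] at hcalc
    exact hcalc
  set N : ℕ → ℕ := fun k => a * b ^ (k - 1) with hN
  set g : ℕ × ℕ → Set (EuclideanSpace ℝ (Fin n)) :=
    fun p => if 1 ≤ p.1 ∧ 1 ≤ p.2 ∧ p.2 ≤ N p.1 then F p.1 p.2 '' T0 else ∅ with hg
  have hTg : T = ⋃ p, g p := by
    rw [hT]; ext x
    simp only [mem_iUnion, hg]
    constructor
    · rintro ⟨k, hk, i, hi1, hi2, hx⟩
      exact ⟨(k, i), by simp only [if_pos (⟨hk, hi1, hi2⟩ : 1 ≤ k ∧ 1 ≤ i ∧ i ≤ N k)]; exact hx⟩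
    · rintro ⟨⟨k, i⟩, hx⟩
      by_cases hc : 1 ≤ k ∧ 1 ≤ i ∧ i ≤ N k
      · rw [if_pos hc] at hx; exact ⟨k, hc.1, i, hc.2.1, hc.2.2, hx⟩
      · rw [if_neg hc] at hx; exact absurd hx (notMem_empty x)
  -- subadditivity over the pieces
  have hsub : perG n s T ≤ ∑' p : ℕ × ℕ, ∫⁻ x in g p, ∫⁻ y in Tᶜ, fracKer n s x y := by
    rw [perG, interL]
    set h : EuclideanSpace ℝ (Fin n) → ℝ≥0∞ := fun x => ∫⁻ y in Tᶜ, fracKer n s x y with hh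
    rw [hTg]
    exact lintegral_iUnion_le _ _
  -- per-piece bound
  have hterm : ∀ p : ℕ × ℕ, (∫⁻ x in g p, ∫⁻ y in Tᶜ, fracKer n s x y)
      ≤ (if 1 ≤ p.1 ∧ 1 ≤ p.2 ∧ p.2 ≤ N p.1 then (ENNReal.ofReal ρ) ^ p.1 * P else 0) := by
    rintro ⟨k, i⟩
    by_cases hc : 1 ≤ k ∧ 1 ≤ i ∧ i ≤ N k
    · rw [if_pos hc, show g (k, i) = F k i '' T0 from if_pos hc]
      have hTsub : F k i '' T0 ⊆ T := by
        rw [hT]; intro x hx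
        exact mem_iUnion.2 ⟨k, mem_iUnion.2 ⟨hc.1, mem_iUnion.2 ⟨i, mem_iUnion.2 ⟨hc.2.1,
          mem_iUnion.2 ⟨hc.2.2, hx⟩⟩⟩⟩⟩
      calc (∫⁻ x in F k i '' T0, ∫⁻ y in Tᶜ, fracKer n s x y)
          ≤ ∫⁻ x in F k i '' T0, ∫⁻ y in (F k i '' T0)ᶜ, fracKer n s x y :=
            lintegral_mono fun x => lintegral_mono_set (compl_subset_compl.2 hTsub)
        _ = (ENNReal.ofReal ρ) ^ k * P := hpiece k i
    · rw [if_neg hc, show g (k, i) = ∅ from if_neg hc]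
      simp
  -- sum the bounds
  have hsum2 : (∑' p : ℕ × ℕ,
        (if 1 ≤ p.1 ∧ 1 ≤ p.2 ∧ p.2 ≤ N p.1 then (ENNReal.ofReal ρ) ^ p.1 * P else 0))
      ≤ (a : ℝ≥0∞) * P * ∑' k : ℕ, q ^ k := by
    rw [ENNReal.tsum_prod']
    have hinner : ∀ k : ℕ,
        (∑' i : ℕ, (if 1 ≤ k ∧ 1 ≤ i ∧ i ≤ N k then (ENNReal.ofReal ρ) ^ k * P else 0))
          ≤ (N k : ℝ≥0∞) * ((ENNReal.ofReal ρ) ^ k * P) := by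
      intro k
      have h0 : ∀ i ∉ Finset.Icc 1 (N k),
          (if 1 ≤ k ∧ 1 ≤ i ∧ i ≤ N k then (ENNReal.ofReal ρ) ^ k * P else 0) = 0 := by
        intro i hi
        rw [Finset.mem_Icc] at hi
        rw [if_neg (by tauto)]
      rw [tsum_eq_sum h0]
      have h1 : ∀ i ∈ Finset.Icc 1 (N k),
          (if 1 ≤ k ∧ 1 ≤ i ∧ i ≤ N k then (ENNReal.ofReal ρ) ^ k * P else 0)
            ≤ (ENNReal.ofReal ρ) ^ k * P := by
        intro i _
        split_ifs
        exacts [le_rfl, zero_le]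
      calc ∑ i ∈ Finset.Icc 1 (N k),
            (if 1 ≤ k ∧ 1 ≤ i ∧ i ≤ N k then (ENNReal.ofReal ρ) ^ k * P else 0)
          ≤ (Finset.Icc 1 (N k)).card • ((ENNReal.ofReal ρ) ^ k * P) :=
            Finset.sum_le_card_nsmul _ _ _ h1
        _ = (N k : ℝ≥0∞) * ((ENNReal.ofReal ρ) ^ k * P) := by
            rw [Nat.card_Icc, nsmul_eq_mul]
            norm_num
    have houter : ∀ k : ℕ, (N k : ℝ≥0∞) * ((ENNReal.ofReal ρ) ^ k * P)
        ≤ (a : ℝ≥0∞) * P * q ^ k := by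
      intro k
      have h1 : ((N k : ℕ) : ℝ≥0∞) ≤ (a : ℝ≥0∞) * (b : ℝ≥0∞) ^ k := by
        rw [hN]
        push_cast
        refine mul_le_mul_right (pow_le_pow_right' ?_ (Nat.sub_le k 1)) _
        exact_mod_cast Nat.one_le_cast.2 hb
      calc (N k : ℝ≥0∞) * ((ENNReal.ofReal ρ) ^ k * P)
          ≤ ((a : ℝ≥0∞) * (b : ℝ≥0∞) ^ k) * ((ENNReal.ofReal ρ) ^ k * P) :=
            mul_le_mul_left h1 _
        _ = (a : ℝ≥0∞) * P * q ^ k := by rw [hqdef, mul_pow]; ring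
    calc (∑' k : ℕ, ∑' i : ℕ,
          (if 1 ≤ k ∧ 1 ≤ i ∧ i ≤ N k then (ENNReal.ofReal ρ) ^ k * P else 0))
        ≤ ∑' k : ℕ, (N k : ℝ≥0∞) * ((ENNReal.ofReal ρ) ^ k * P) :=
          ENNReal.tsum_le_tsum hinner
      _ ≤ ∑' k : ℕ, (a : ℝ≥0∞) * P * q ^ k := ENNReal.tsum_le_tsum houter
      _ = (a : ℝ≥0∞) * P * ∑' k : ℕ, q ^ k := ENNReal.tsum_mul_left
  have hgeo : (∑' k : ℕ, q ^ k) < ⊤ := by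
    rw [ENNReal.tsum_geometric]
    exact ENNReal.inv_lt_top.2 (tsub_pos_of_lt hq1)
  have hfin : (a : ℝ≥0∞) * P * ∑' k : ℕ, q ^ k < ⊤ :=
    ENNReal.mul_lt_top (ENNReal.mul_lt_top (ENNReal.natCast_lt_top a) hPT0) hgeo
  exact lt_of_le_of_lt (hsub.trans ((ENNReal.tsum_le_tsum hterm).trans hsum2)) hfin
end

section
/- Let n ≥ 1, λ > 1, let a, b be positive integers, and let T_0 ⊆ ℝⁿ be a bounded measurable set with |T_0| > 0. For each integer k ≥ 1 and each 1 ≤ i ≤ a b^{k−1}, let R_k^i be a linear isometry of ℝⁿ and x_k^i ∈ ℝⁿ, define F_k^i(x) := R_k^i(λ^{−k} x) + x_k^i, and set T := ⋃_{k≥1} ⋃_{i=1}^{a b^{k−1}} F_k^i(T_0). Assume |F_k^i(T_0) ∩ F_h^j(T_0)| = 0 whenever (k,i) ≠ (h,j), and assume there exists a measurable set S_0 ⊆ ℝⁿ with |S_0| > 0 such that |F_k^i(S_0) ∩ T| = 0 for every k ≥ 1 and 1 ≤ i ≤ a b^{k−1}. If s ∈ (0,1) satisfies s ≥ n − log b /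 log λ, then P_s(T) = ∞. -/
open MeasureTheory Metric Set Filter Bornology
open scoped ENNReal Topology Pointwise

/-- Let `T` be the union of the sets `F_k^i(T₀)`, `k ≥ 1`,
`1 ≤ i ≤ a b^{k-1}`, with `|T₀| > 0`, the pieces pairwise a.e. disjoint, and suppose
there is a set `S₀` with `|S₀| > 0` such that each `F_k^i(S₀)` is a.e. disjoint
from `T`. If `s ∈ (0,1)` with `s ≥ n - log b / log λ`, then `P_s(T) = ∞`. -/
theorem perG_eq_top_selfSimilar (n : ℕ) (hn : 1 ≤ n) (lam : ℝ) (hlam : 1 < lam)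
    (a b : ℕ) (ha : 0 < a) (hb : 0 < b)
    (T0 : Set (EuclideanSpace ℝ (Fin n))) (hT0m : MeasurableSet T0) (hT0b : IsBounded T0)
    (hT0pos : 0 < volume T0)
    (R : ℕ → ℕ → (EuclideanSpace ℝ (Fin n) →ₗᵢ[ℝ] EuclideanSpace ℝ (Fin n)))
    (c : ℕ → ℕ → EuclideanSpace ℝ (Fin n))
    (F : ℕ → ℕ → EuclideanSpace ℝ (Fin n) → EuclideanSpace ℝ (Fin n))
    (hF : ∀ k i x, F k i x = R k i ((lam ^ k)⁻¹ • x) + c k i)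
    (T : Set (EuclideanSpace ℝ (Fin n)))
    (hT : T = ⋃ (k : ℕ) (_ : 1 ≤ k) (i : ℕ) (_ : 1 ≤ i) (_ : i ≤ a * b ^ (k - 1)),
        F k i '' T0)
    (hdisj : ∀ k h i j : ℕ, 1 ≤ k → 1 ≤ h → 1 ≤ i → i ≤ a * b ^ (k - 1) →
        1 ≤ j → j ≤ a * b ^ (h - 1) → (k, i) ≠ (h, j) →
        volume (F k i '' T0 ∩ F h j '' T0) = 0)
    (S0 : Set (EuclideanSpace ℝ (Fin n))) (hS0m : MeasurableSet S0)
    (hS0pos : 0 < volume S0)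
    (hS0 : ∀ k i : ℕ, 1 ≤ k → 1 ≤ i → i ≤ a * b ^ (k - 1) →
        volume (F k i '' S0 ∩ T) = 0)
    (s : ℝ) (hs : s ∈ Set.Ioo (0 : ℝ) 1)
    (hsd : (n : ℝ) - Real.log b / Real.log lam ≤ s) :
    perG n s T = ⊤ := by
  classical
  obtain ⟨hs0, hs1⟩ := hs
  have hlam0 : (0 : ℝ) < lam := lt_trans one_pos hlam
  have hns : (0 : ℝ) < (n : ℝ) + s := by positivity
  have hr_pos : ∀ k : ℕ, (0 : ℝ) < (lam ^ k)⁻¹ := fun k => inv_pos.2 (pow_pos hlam0 k)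
  -- choose a bound M with T0 ⊆ ball 0 M and volume (S0 ∩ ball 0 M) > 0
  obtain ⟨r0, hr0⟩ := hT0b.subset_ball (0 : EuclideanSpace ℝ (Fin n))
  obtain ⟨m, hm⟩ : ∃ m : ℕ,
      volume (S0 ∩ ball (0 : EuclideanSpace ℝ (Fin n)) ((m : ℝ) + 1)) ≠ 0 := by
    by_contra hcon
    push_neg at hcon
    have hcover : S0 = ⋃ m : ℕ, S0 ∩ ball (0 : EuclideanSpace ℝ (Fin n)) ((m : ℝ) + 1) := by
      ext x
      simp only [mem_iUnion, mem_inter_iff, mem_ball]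
      constructor
      · intro hx
        obtain ⟨m, hm⟩ := exists_nat_gt (dist x 0)
        exact ⟨m, hx, lt_trans hm (by linarith)⟩
      · rintro ⟨m, hx, -⟩; exact hx
    have : volume S0 = 0 := by
      rw [hcover]; exact measure_iUnion_null fun m => hcon m
    simp [this] at hS0pos
  set M : ℝ := max r0 ((m : ℝ) + 1) with hMdef
  have hM0 : (0 : ℝ) < M := lt_of_lt_of_le (by positivity) (le_max_right _ _)
  have hT0M : T0 ⊆ ball 0 M := hr0.trans (ball_subset_ball (le_max_left _ _))
  set S : Set (EuclideanSpace ℝ (Fin n)) := S0 ∩ ball 0 M with hSdef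
  have hSm : MeasurableSet S := hS0m.inter measurableSet_ball
  have hSM : S ⊆ ball 0 M := inter_subset_right
  have hSpos : volume S ≠ 0 := by
    intro h0
    exact hm (measure_mono_null
      (inter_subset_inter_right _ (ball_subset_ball (le_max_right _ _))) h0)
  have hS0' : ∀ k i : ℕ, 1 ≤ k → 1 ≤ i → i ≤ a * b ^ (k - 1) →
      volume (F k i '' S ∩ T) = 0 := fun k i hk h1 h2 =>
    measure_mono_null (inter_subset_inter_left _ (image_mono inter_subset_left))
      (hS0 k i hk h1 h2)
  -- the linear isometry as an equivalence
  set e : ℕ → ℕ → (EuclideanSpace ℝ (Fin n) ≃ₗᵢ[ℝ] EuclideanSpace ℝ (Fin n)) :=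
    fun k i => (R k i).toLinearIsometryEquiv rfl with hedef
  have hFimg : ∀ k i (A : Set (EuclideanSpace ℝ (Fin n))),
      F k i '' A = (fun y => y + c k i) '' (⇑(e k i) '' ((lam ^ k)⁻¹ • A)) := by
    intro k i A
    rw [← Set.image_smul, Set.image_image, Set.image_image]
    apply Set.image_congr
    intro x _
    simp [hedef, LinearIsometry.toLinearIsometryEquiv_apply, hF]
  have hFmeas : ∀ k i {A : Set (EuclideanSpace ℝ (Fin n))}, MeasurableSet A →
      MeasurableSet (F k i '' A) := by
    intro k i A hA
    rw [hFimg]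
    have h1 : MeasurableSet ((lam ^ k)⁻¹ • A) := hA.const_smul₀ _
    have h2 : MeasurableSet (⇑(e k i) '' ((lam ^ k)⁻¹ • A)) := by
      rw [show ⇑(e k i) '' ((lam ^ k)⁻¹ • A) = ⇑(e k i).symm ⁻¹' ((lam ^ k)⁻¹ • A) from
        Set.image_eq_preimage_of_inverse (fun x => (e k i).symm_apply_apply x)
          (fun x => (e k i).apply_symm_apply x) ▸ rfl]
      exact h1.preimage (e k i).symm.continuous.measurable
    rw [Set.image_add_right]
    exact h2.preimage (measurable_add_const _)
  have hvol : ∀ k i {A : Set (EuclideanSpace ℝ (Fin n))}, MeasurableSet A →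
      volume (F k i '' A) = ENNReal.ofReal (((lam ^ k)⁻¹) ^ n) * volume A := by
    intro k i A hA
    have h1 : MeasurableSet ((lam ^ k)⁻¹ • A) := hA.const_smul₀ _
    rw [hFimg, Set.image_add_right, measure_preimage_add_right]
    rw [show ⇑(e k i) '' ((lam ^ k)⁻¹ • A) = ⇑(e k i).symm ⁻¹' ((lam ^ k)⁻¹ • A) from
      Set.image_eq_preimage_of_inverse (fun x => (e k i).symm_apply_apply x)
        (fun x => (e k i).apply_symm_apply x) ▸ rfl]
    rw [(e k i).symm.measurePreserving.measure_preimage h1.nullMeasurableSet]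
    rw [Measure.addHaar_smul]
    congr 2
    rw [finrank_euclideanSpace_fin]
    exact abs_of_pos (pow_pos (hr_pos k) n)
  have hFdist : ∀ k i (u v : EuclideanSpace ℝ (Fin n)),
      ‖F k i u - F k i v‖ = (lam ^ k)⁻¹ * ‖u - v‖ := by
    intro k i u v
    have h1 : F k i u - F k i v = R k i ((lam ^ k)⁻¹ • (u - v)) := by
      rw [hF, hF, smul_sub, map_sub]; abel
    rw [h1, (R k i).norm_map, norm_smul, Real.norm_eq_abs, abs_of_pos (hr_pos k)]
  have hsubT : ∀ k i : ℕ, 1 ≤ k → 1 ≤ i → i ≤ a * b ^ (k - 1) → F k i '' T0 ⊆ T := by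
    intro k i hk h1 h2 x hx
    rw [hT]; simp only [mem_iUnion]; exact ⟨k, hk, i, h1, h2, hx⟩
  have hKer : ∀ x : EuclideanSpace ℝ (Fin n), Measurable (fun y => fracKer n s x y) :=
    fun x => ((measurable_const.sub measurable_id).norm.pow measurable_const).ennreal_ofReal

  -- comparison of lam^(n-s) with b
  have hbR : (0:ℝ) < (b:ℝ) := by exact_mod_cast hb
  have hbb : lam ^ ((n:ℝ) - s) ≤ (b:ℝ) := by
    have hlogpos : 0 < Real.log lam := Real.log_pos hlam
    have h1 : ((n:ℝ) - s) ≤ Real.log b / Real.log lam := by linarith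
    have h2 : ((n:ℝ) - s) * Real.log lam ≤ Real.log b := by
      have := mul_le_mul_of_nonneg_right h1 hlogpos.le
      rwa [div_mul_cancel₀ _ hlogpos.ne'] at this
    calc lam ^ ((n:ℝ) - s) = Real.exp (((n:ℝ) - s) * Real.log lam) := by
          rw [Real.rpow_def_of_pos hlam0, mul_comm]
      _ ≤ Real.exp (Real.log b) := Real.exp_le_exp.2 h2
      _ = b := Real.exp_log hbR
  set C : ℝ := (2*M) ^ (-((n:ℝ) + s)) * (lam ^ ((n:ℝ) - s))⁻¹ with hCdef
  have h2M : (0:ℝ) < 2*M := by linarith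
  have hlamns : (0:ℝ) < lam ^ ((n:ℝ) - s) := Real.rpow_pos_of_pos hlam0 _
  have hC0 : 0 < C := by positivity
  -- the key real inequality
  have hrho : ∀ k : ℕ, 1 ≤ k → C * ((b:ℝ) ^ (k-1))⁻¹ ≤
      ((lam ^ k)⁻¹ * (2*M)) ^ (-((n:ℝ) + s)) * ((lam ^ k)⁻¹) ^ n * ((lam ^ k)⁻¹) ^ n := by
    intro k hk
    have hrpos := hr_pos k
    have hE : ((lam ^ k)⁻¹ * (2*M)) ^ (-((n:ℝ) + s)) * ((lam ^ k)⁻¹) ^ n * ((lam ^ k)⁻¹) ^ n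
        = (2*M) ^ (-((n:ℝ) + s)) * ((lam ^ k)⁻¹) ^ ((n:ℝ) - s) := by
      rw [Real.mul_rpow hrpos.le h2M.le, ← Real.rpow_natCast ((lam ^ k)⁻¹) n]
      have : (lam ^ k)⁻¹ ^ (-((n:ℝ) + s)) * (2*M) ^ (-((n:ℝ) + s)) *
            (lam ^ k)⁻¹ ^ ((n:ℝ)) * (lam ^ k)⁻¹ ^ ((n:ℝ))
          = (2*M) ^ (-((n:ℝ) + s)) *
            ((lam ^ k)⁻¹ ^ (-((n:ℝ) + s)) * (lam ^ k)⁻¹ ^ ((n:ℝ)) * (lam ^ k)⁻¹ ^ ((n:ℝ))) := by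
        ring
      rw [this, ← Real.rpow_add hrpos, ← Real.rpow_add hrpos]
      congr 1
      ring
    rw [hE]
    have hpow : ((lam ^ k)⁻¹) ^ ((n:ℝ) - s) = ((lam ^ ((n:ℝ) - s)) ^ k)⁻¹ := by
      rw [Real.inv_rpow (pow_pos hlam0 k).le]
      congr 1
      rw [← Real.rpow_natCast lam k, ← Real.rpow_mul hlam0.le, mul_comm,
        Real.rpow_mul hlam0.le, Real.rpow_natCast]
    rw [hpow]
    have hsplit : (lam ^ ((n:ℝ) - s)) ^ k = lam ^ ((n:ℝ) - s) * (lam ^ ((n:ℝ) - s)) ^ (k-1) := by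
      conv_lhs => rw [← Nat.succ_pred_eq_of_pos hk]
      rw [pow_succ, Nat.pred_eq_sub_one]
      ring
    have hle : (lam ^ ((n:ℝ) - s)) ^ (k-1) ≤ (b:ℝ) ^ (k-1) :=
      pow_le_pow_left₀ hlamns.le hbb _
    have hprod : (lam ^ ((n:ℝ) - s)) ^ k ≤ lam ^ ((n:ℝ) - s) * (b:ℝ) ^ (k-1) := by
      rw [hsplit]
      exact mul_le_mul_of_nonneg_left hle hlamns.le
    have hinv : (lam ^ ((n:ℝ) - s) * (b:ℝ) ^ (k-1))⁻¹ ≤ ((lam ^ ((n:ℝ) - s)) ^ k)⁻¹ :=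
      inv_anti₀ (pow_pos hlamns k) hprod
    calc C * ((b:ℝ) ^ (k-1))⁻¹
        = (2*M) ^ (-((n:ℝ) + s)) * (lam ^ ((n:ℝ) - s) * (b:ℝ) ^ (k-1))⁻¹ := by
          rw [hCdef, mul_inv]; ring
      _ ≤ (2*M) ^ (-((n:ℝ) + s)) * ((lam ^ ((n:ℝ) - s)) ^ k)⁻¹ :=
          mul_le_mul_of_nonneg_left hinv (Real.rpow_nonneg h2M.le _)
  
  -- the function integrated over T
  set g : EuclideanSpace ℝ (Fin n) → ℝ≥0∞ := fun x => ∫⁻ y in Tᶜ, fracKer n s x y with hgdef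
  set V : ℝ≥0∞ := volume S * volume T0 with hVdef
  have hV0 : V ≠ 0 := mul_ne_zero hSpos hT0pos.ne'
  have hpiece : ∀ k i : ℕ, 1 ≤ k → 1 ≤ i → i ≤ a * b ^ (k - 1) →
      ENNReal.ofReal (C * ((b:ℝ) ^ (k-1))⁻¹) * V ≤ ∫⁻ x in F k i '' T0, g x := by
    intro k i hk h1 h2
    have hrpos := hr_pos k
    set B : Set (EuclideanSpace ℝ (Fin n)) := F k i '' S \ T with hBdef
    have hBsub : B ⊆ Tᶜ := fun y hy => hy.2
    have hBvol : volume B = ENNReal.ofReal (((lam ^ k)⁻¹) ^ n) * volume S := by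
      rw [hBdef, measure_diff_null' (hS0' k i hk h1 h2), hvol k i hSm]
    have hAvol : volume (F k i '' T0) = ENNReal.ofReal (((lam ^ k)⁻¹) ^ n) * volume T0 :=
      hvol k i hT0m
    have hkerlow : ∀ x ∈ F k i '' T0, ∀ y ∈ B,
        ENNReal.ofReal (((lam ^ k)⁻¹ * (2*M)) ^ (-((n:ℝ) + s))) ≤ fracKer n s x y := by
      rintro x hx y hy
      obtain ⟨u, hu, rfl⟩ := hx
      obtain ⟨⟨v, hv, rfl⟩, hyT⟩ := hy
      have hxT : F k i u ∈ T := hsubT k i hk h1 h2 ⟨u, hu, rfl⟩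
      have hne : F k i u ≠ F k i v := fun hEq => hyT (hEq ▸ hxT)
      have hnorm : 0 < ‖F k i u - F k i v‖ := by
        rw [norm_pos_iff, sub_ne_zero]; exact hne
      have hub : ‖F k i u - F k i v‖ ≤ (lam ^ k)⁻¹ * (2*M) := by
        rw [hFdist]
        have hu' : ‖u‖ < M := by simpa [mem_ball, dist_zero_right] using hT0M hu
        have hv' : ‖v‖ < M := by simpa [mem_ball, dist_zero_right] using hSM hv
        have hsum : ‖u - v‖ ≤ 2*M := le_trans (norm_sub_le _ _) (by linarith)
        exact mul_le_mul_of_nonneg_left hsum hrpos.le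
      exact ENNReal.ofReal_le_ofReal
        (Real.rpow_le_rpow_of_nonpos hnorm hub (by linarith))
    have hstep : ∀ x ∈ F k i '' T0,
        ENNReal.ofReal (((lam ^ k)⁻¹ * (2*M)) ^ (-((n:ℝ) + s))) * volume B ≤ g x := by
      intro x hx
      calc ENNReal.ofReal (((lam ^ k)⁻¹ * (2*M)) ^ (-((n:ℝ) + s))) * volume B
          = ∫⁻ y in B, ENNReal.ofReal (((lam ^ k)⁻¹ * (2*M)) ^ (-((n:ℝ) + s))) :=
            (setLIntegral_const _ _).symm
        _ ≤ ∫⁻ y in B, fracKer n s x y :=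
            setLIntegral_mono (hKer x) (fun y hy => hkerlow x hx y hy)
        _ ≤ g x := lintegral_mono_set hBsub
    calc ENNReal.ofReal (C * ((b:ℝ) ^ (k-1))⁻¹) * V
        ≤ ENNReal.ofReal (((lam ^ k)⁻¹ * (2*M)) ^ (-((n:ℝ) + s)) *
            ((lam ^ k)⁻¹) ^ n * ((lam ^ k)⁻¹) ^ n) * V :=
          mul_le_mul_left (ENNReal.ofReal_le_ofReal (hrho k hk)) V
      _ = (ENNReal.ofReal (((lam ^ k)⁻¹ * (2*M)) ^ (-((n:ℝ) + s))) * volume B) *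
            volume (F k i '' T0) := by
          rw [ENNReal.ofReal_mul (by positivity), ENNReal.ofReal_mul (by positivity),
            hBvol, hAvol, hVdef]
          ring
      _ = ∫⁻ _ in F k i '' T0,
            (ENNReal.ofReal (((lam ^ k)⁻¹ * (2*M)) ^ (-((n:ℝ) + s))) * volume B) := by
          rw [setLIntegral_const]
      _ ≤ ∫⁻ x in F k i '' T0, g x := setLIntegral_mono' (hFmeas k i hT0m) hstep
  -- the constant
  set c0 : ℝ≥0∞ := (a:ℝ≥0∞) * (ENNReal.ofReal C * V) with hc0def
  have hc0ne : c0 ≠ 0 := by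
    refine mul_ne_zero ?_ (mul_ne_zero ?_ hV0)
    · exact_mod_cast ha.ne'
    · exact (ENNReal.ofReal_pos.2 hC0).ne'
  have hbMain : ∀ K : ℕ, (K:ℝ≥0∞) * c0 ≤ perG n s T := by
    intro K
    set σ : Finset ((_ : ℕ) × ℕ) :=
      (Finset.Icc 1 K).sigma (fun k => Finset.Icc 1 (a * b ^ (k-1))) with hσdef
    have hmem : ∀ p ∈ σ, (1 ≤ p.1 ∧ p.1 ≤ K) ∧ 1 ≤ p.2 ∧ p.2 ≤ a * b ^ (p.1 - 1) := by
      intro p hp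
      simpa [hσdef, Finset.mem_sigma, Finset.mem_Icc] using hp
    have hUsub : (⋃ p ∈ σ, F p.1 p.2 '' T0) ⊆ T :=
      iUnion₂_subset fun p hp =>
        hsubT p.1 p.2 (hmem p hp).1.1 (hmem p hp).2.1 (hmem p hp).2.2
    have hdisj' : Set.Pairwise ↑σ
        (Function.onFun (MeasureTheory.AEDisjoint volume) fun p : (_ : ℕ) × ℕ => F p.1 p.2 '' T0) := by
      rintro ⟨p1, p2⟩ hp ⟨q1, q2⟩ hq hpq
      have hne : (p1, p2) ≠ (q1, q2) := by
        intro hEq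
        rw [Prod.mk.injEq] at hEq
        exact hpq (by rw [hEq.1, hEq.2])
      have hp' := hmem _ (Finset.mem_coe.mp hp)
      have hq' := hmem _ (Finset.mem_coe.mp hq)
      show volume (F p1 p2 '' T0 ∩ F q1 q2 '' T0) = 0
      exact hdisj p1 q1 p2 q2 hp'.1.1 hq'.1.1 hp'.2.1 hp'.2.2 hq'.2.1 hq'.2.2 hne
    have hsum : ∑ p ∈ σ, (ENNReal.ofReal (C * ((b:ℝ) ^ (p.1-1))⁻¹) * V) = (K:ℝ≥0∞) * c0 := by
      rw [hσdef, Finset.sum_sigma]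
      have hinner : ∀ k ∈ Finset.Icc 1 K,
          ∑ _i ∈ Finset.Icc 1 (a * b ^ (k-1)),
            (ENNReal.ofReal (C * ((b:ℝ) ^ (k-1))⁻¹) * V) = c0 := by
        intro k _
        rw [Finset.sum_const, Nat.card_Icc]
        simp only [Nat.add_sub_cancel]
        rw [nsmul_eq_mul]
        have hbk : ((b:ℝ) ^ (k-1)) = ((b ^ (k-1) : ℕ) : ℝ) := by push_cast; ring
        rw [ENNReal.ofReal_mul hC0.le, hbk, ENNReal.ofReal_inv_of_pos (by positivity),
          ENNReal.ofReal_natCast, Nat.cast_mul]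
        have hcancel : ((b ^ (k-1) : ℕ) : ℝ≥0∞) * (((b ^ (k-1) : ℕ) : ℝ≥0∞))⁻¹ = 1 :=
          ENNReal.mul_inv_cancel (by exact_mod_cast (pow_pos hb (k-1)).ne')
            (ENNReal.natCast_ne_top _)
        calc (a:ℝ≥0∞) * ((b ^ (k-1) : ℕ):ℝ≥0∞) *
              (ENNReal.ofReal C * (((b ^ (k-1) : ℕ):ℝ≥0∞))⁻¹ * V)
            = (a:ℝ≥0∞) * (ENNReal.ofReal C * V) *
              (((b ^ (k-1) : ℕ):ℝ≥0∞) * (((b ^ (k-1) : ℕ):ℝ≥0∞))⁻¹) := by ring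
          _ = c0 := by rw [hcancel, hc0def]; ring
      rw [Finset.sum_congr rfl hinner, Finset.sum_const, Nat.card_Icc, Nat.add_sub_cancel,
        nsmul_eq_mul]
    calc (K:ℝ≥0∞) * c0
        = ∑ p ∈ σ, (ENNReal.ofReal (C * ((b:ℝ) ^ (p.1-1))⁻¹) * V) := hsum.symm
      _ ≤ ∑ p ∈ σ, ∫⁻ x in F p.1 p.2 '' T0, g x :=
          Finset.sum_le_sum fun p hp =>
            hpiece p.1 p.2 (hmem p hp).1.1 (hmem p hp).2.1 (hmem p hp).2.2
      _ = ∫⁻ x in ⋃ p ∈ σ, F p.1 p.2 '' T0, g x :=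
          (lintegral_biUnion_finset₀ hdisj'
            (fun p _ => (hFmeas p.1 p.2 hT0m).nullMeasurableSet) g).symm
      _ ≤ ∫⁻ x in T, g x := lintegral_mono_set hUsub
      _ = perG n s T := rfl
  have htop : (⊤:ℝ≥0∞) ≤ perG n s T := by
    have h1 : (⊤:ℝ≥0∞) = (⨆ K : ℕ, (K:ℝ≥0∞)) * c0 := by
      rw [ENNReal.iSup_natCast, ENNReal.top_mul hc0ne]
    rw [h1, ENNReal.iSup_mul]
    exact iSup_le hbMain
  exact top_le_iff.mp htop
end
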